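/- arXiv:1707.03814 — 8 statements merged into one kernel-verified Lean document; each statement's English description precedes it below -/
import Mathlib

section
/- In the localic topology on 𝕊, the closure of a singleton {s} is the set of divisors {x ∈ 𝕊 : x ∣ s}; equivalently, x specializes to y in 𝕊 if and only if y ∣ x. In particular 𝕊 is an irreducible topological space with generic point Ω = ∏_p p^∞, the supernatural number all of whose exponents are ∞ (i.e., the closure of {Ω} is all of 𝕊). -/
open Topology

/-- A supernatural number: a function from the set of primes to `ℕ∞ = ℕ ∪ {∞}`,
thought of as the formal product `∏ p ^ (s p)`. -/
def Supernatural : Type := Nat.Primes → ℕ∞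

/-- Divisibility of supernatural numbers: `s ∣ t` iff `s p ≤ t p` for every prime `p`. -/
instance : Dvd Supernatural := ⟨fun s t => ∀ p, s p ≤ t p⟩

/-- The supernatural number associated to a positive natural number,
given by its prime factorization. -/
def natToSuper (n : ℕ+) : Supernatural := fun p => ((n : ℕ).factorization p : ℕ∞)

/-- The localic topology on `𝕊`, generated by the open sets `(n) = {s : n ∣ s}`
for `n` a positive natural number. -/
def localicTopology : TopologicalSpace Supernatural :=
  .generateFrom {U | ∃ n : ℕ+, U = {s | natToSuper n ∣ s}}

attribute [instance] localicTopology

/-- The maximal supernatural number `Ω = ∏ p ^ ∞`. -/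
def Omega : Supernatural := fun _ => ⊤

lemma supernatural_key (s x : Supernatural) : x ∈ closure ({s} : Set Supernatural) ↔ x ∣ s := by
  rw [← specializes_iff_mem_closure, specializes_iff_forall_open]
  constructor
  · intro h p
    by_contra hlt
    push_neg at hlt
    -- hlt : s p < x p
    have hne : s p ≠ ⊤ := hlt.ne_top
    obtain ⟨m, hm⟩ : ∃ m : ℕ, s p = (m : ℕ∞) := ⟨(s p).toNat, (ENat.coe_toNat hne).symm⟩
    have hm1 : ((m + 1 : ℕ) : ℕ∞) ≤ x p := by
      have := Order.add_one_le_of_lt hlt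
      rw [hm] at this
      exact_mod_cast this
    have hp : (p : ℕ).Prime := p.2
    set N : ℕ+ := ⟨(p : ℕ) ^ (m + 1), pow_pos hp.pos _⟩ with hN
    have hfac : ∀ q : Nat.Primes, natToSuper N q =
        if (q : ℕ) = (p : ℕ) then ((m + 1 : ℕ) : ℕ∞) else 0 := by
      intro q
      simp only [natToSuper, hN, PNat.mk_coe, hp.factorization_pow]
      by_cases hq : (q : ℕ) = (p : ℕ)
      · simp [hq, Finsupp.single_apply]
      · simp [Finsupp.single_apply, Ne.symm hq, hq]
    have hU : IsOpen {t : Supernatural | natToSuper N ∣ t} :=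
      TopologicalSpace.GenerateOpen.basic _ ⟨N, rfl⟩
    have hxU : x ∈ {t : Supernatural | natToSuper N ∣ t} := by
      intro q
      rw [hfac q]
      by_cases hq : (q : ℕ) = (p : ℕ)
      · have : q = p := Subtype.ext hq
        simp only [hq, if_pos rfl, this]
        exact hm1
      · simp [hq]
    have hsU := h _ hU hxU
    have := hsU p
    rw [hfac p, if_pos rfl, hm] at this
    have h2 : (m + 1 : ℕ) ≤ m := by exact_mod_cast this
    omega
  · intro hdvd U hU
    induction hU with
    | basic V hV =>
      intro hxU
      obtain ⟨n, rfl⟩ := hV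
      exact fun p => (hxU p).trans (hdvd p)
    | univ => exact fun _ => trivial
    | inter U V _ _ ihU ihV => exact fun hx => ⟨ihU hx.1, ihV hx.2⟩
    | sUnion S _ ih => exact fun ⟨V, hVS, hxV⟩ => ⟨V, hVS, ih V hVS hxV⟩

theorem stmt1 :
    (∀ s : Supernatural, closure {s} = {x | x ∣ s}) ∧
    (∀ x y : Supernatural, x ⤳ y ↔ y ∣ x) ∧
    IrreducibleSpace Supernatural ∧
    closure {Omega} = Set.univ := by
  have hclo : ∀ s : Supernatural, closure ({s} : Set Supernatural) = {x | x ∣ s} :=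
    fun s => Set.ext fun x => supernatural_key s x
  have hOmega : closure ({Omega} : Set Supernatural) = Set.univ := by
    rw [hclo]
    exact Set.eq_univ_of_forall fun x p => le_top
  have hpre : IsPreirreducible (Set.univ : Set Supernatural) := by
    intro U V hU hV ⟨a, _, haU⟩ ⟨b, _, hbV⟩
    have hOm : ∀ (W : Set Supernatural) (w : Supernatural), IsOpen W → w ∈ W → Omega ∈ W := by
      intro W w hW hwW
      have : w ∈ closure ({Omega} : Set Supernatural) := hOmega ▸ Set.mem_univ w
      obtain ⟨z, hzW, hz⟩ := (mem_closure_iff.mp this) W hW hwW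
      rwa [Set.mem_singleton_iff.mp hz] at hzW
    exact ⟨Omega, Set.mem_univ _, hOm U a hU haU, hOm V b hV hbV⟩
  exact ⟨hclo, fun x y => by rw [specializes_iff_mem_closure, supernatural_key],
    @IrreducibleSpace.mk _ _ ⟨hpre⟩ ⟨Omega⟩, hOmega⟩
end

section
/- Give 𝕊 the localic topology. (a) For every positive natural number n and every supernatural number s with n ∣ s, the set (n) ∩ {x : x ∣ s} = {x ∈ 𝕊 : n ∣ x and x ∣ s} is locally closed. (b) Conversely, for every locally closed subset V ⊆ 𝕊 and every s ∈ V, there exists a positive natural number n with n ∣ s such that {x ∈ 𝕊 : n ∣ x and x ∣ s} ⊆ V. -/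
open Topology

lemma super_dvd_def {s t : Supernatural} : s ∣ t ↔ ∀ p, s p ≤ t p := Iff.rfl

lemma super_dvd_trans {a b c : Supernatural} (h1 : a ∣ b) (h2 : b ∣ c) : a ∣ c :=
  fun p => (h1 p).trans (h2 p)

lemma basic_open (n : ℕ+) : IsOpen {s : Supernatural | natToSuper n ∣ s} :=
  TopologicalSpace.GenerateOpen.basic _ ⟨n, rfl⟩

lemma natToSuper_lcm_dvd (n m : ℕ+) (x : Supernatural) :
    natToSuper ⟨Nat.lcm n m, Nat.lcm_pos n.2 m.2⟩ ∣ x ↔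
      natToSuper n ∣ x ∧ natToSuper m ∣ x := by
  simp only [super_dvd_def, natToSuper, ← forall_and]
  refine forall_congr' fun p => ?_
  show ((Nat.lcm (n : ℕ) (m : ℕ)).factorization p.1 : ℕ∞) ≤ x p ↔
    ((n : ℕ).factorization p.1 : ℕ∞) ≤ x p ∧ ((m : ℕ).factorization p.1 : ℕ∞) ≤ x p
  rw [Nat.factorization_lcm n.ne_zero m.ne_zero]
  rw [Finsupp.sup_apply]
  constructor
  · intro h
    exact ⟨le_trans (Nat.cast_le.mpr le_sup_left) h, le_trans (Nat.cast_le.mpr le_sup_right) h⟩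
  · rintro ⟨h1, h2⟩
    rcases le_total ((n : ℕ).factorization p.1) ((m : ℕ).factorization p.1) with h | h
    · rwa [sup_eq_right.mpr h]
    · rwa [sup_eq_left.mpr h]

lemma dvd_closed (s : Supernatural) : IsClosed {x : Supernatural | x ∣ s} := by
  rw [← isOpen_compl_iff, isOpen_iff_forall_mem_open]
  intro x hx
  simp only [Set.mem_compl_iff, Set.mem_setOf_eq, super_dvd_def, not_forall, not_le] at hx
  obtain ⟨p, hp⟩ := hx
  obtain ⟨k, hk⟩ := WithTop.ne_top_iff_exists.mp (ne_top_of_lt hp)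
  set m : ℕ+ := ⟨p.1 ^ (k + 1), pow_pos p.2.pos _⟩ with hm
  have hfact : ∀ q : Nat.Primes, natToSuper m q = ((Finsupp.single p.1 (k+1)) q.1 : ℕ∞) := by
    intro q
    simp only [natToSuper, hm]
    rw [show ((m : ℕ)) = p.1 ^ (k+1) from rfl, Nat.Prime.factorization_pow p.2]
  refine ⟨{y | natToSuper m ∣ y}, ?_, basic_open m, ?_⟩
  · intro y hy
    simp only [Set.mem_setOf_eq, super_dvd_def] at hy
    have := hy p
    rw [hfact p, Finsupp.single_eq_same] at this
    simp only [Set.mem_compl_iff, Set.mem_setOf_eq, super_dvd_def, not_forall, not_le]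
    refine ⟨p, lt_of_lt_of_le ?_ this⟩
    rw [← hk]
    exact Nat.cast_lt.mpr (lt_add_one k)
  · simp only [Set.mem_setOf_eq, super_dvd_def]
    intro q
    rw [hfact q]
    rcases eq_or_ne q p with rfl | hq
    · rw [Finsupp.single_eq_same]
      have : (k : ℕ∞) < x q := lt_of_le_of_lt hk.le hp
      rw [show ((k+1 : ℕ) : ℕ∞) = (k : ℕ∞) + 1 by push_cast; ring]
      exact Order.add_one_le_of_lt this
    · rw [Finsupp.single_eq_of_ne' (fun h => hq (Subtype.ext h.symm))]
      simp

lemma open_basis {U : Set Supernatural} (hU : IsOpen U) :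
    ∀ s ∈ U, ∃ n : ℕ+, natToSuper n ∣ s ∧ {x | natToSuper n ∣ x} ⊆ U := by
  induction hU with
  | basic V hV =>
    obtain ⟨n, rfl⟩ := hV
    exact fun s hs => ⟨n, hs, subset_rfl⟩
  | univ =>
    intro s _
    refine ⟨1, ?_, Set.subset_univ _⟩
    intro p
    simp [natToSuper]
  | inter V W hV hW ihV ihW =>
    intro s hs
    obtain ⟨n, hn, hnV⟩ := ihV s hs.1
    obtain ⟨m, hm, hmW⟩ := ihW s hs.2
    refine ⟨⟨Nat.lcm n m, Nat.lcm_pos n.2 m.2⟩, (natToSuper_lcm_dvd n m s).mpr ⟨hn, hm⟩, ?_⟩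
    intro x hx
    rw [Set.mem_setOf_eq, natToSuper_lcm_dvd] at hx
    exact ⟨hnV hx.1, hmW hx.2⟩
  | sUnion 𝒮 h ih =>
    intro s hs
    obtain ⟨V, hV𝒮, hsV⟩ := hs
    obtain ⟨n, hn, hsub⟩ := ih V hV𝒮 s hsV
    exact ⟨n, hn, hsub.trans (Set.subset_sUnion_of_mem hV𝒮)⟩

theorem stmt2 :
    (∀ (n : ℕ+) (s : Supernatural), natToSuper n ∣ s →
      IsLocallyClosed {x | natToSuper n ∣ x ∧ x ∣ s}) ∧
    (∀ V : Set Supernatural, IsLocallyClosed V → ∀ s ∈ V,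
      ∃ n : ℕ+, natToSuper n ∣ s ∧ {x | natToSuper n ∣ x ∧ x ∣ s} ⊆ V) := by
  constructor
  · intro n s _
    exact ⟨_, _, basic_open n, dvd_closed s, rfl⟩
  · rintro V ⟨U, Z, hU, hZ, rfl⟩ s ⟨hsU, hsZ⟩
    obtain ⟨n, hn, hsub⟩ := open_basis hU s hsU
    refine ⟨n, hn, ?_⟩
    rintro x ⟨hnx, hxs⟩
    refine ⟨hsub hnx, ?_⟩
    by_contra hxZ
    obtain ⟨m, hm, hsub'⟩ := open_basis hZ.isOpen_compl x hxZ
    exact hsub' (super_dvd_trans hm hxs) hsZ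
end

section
/- For every subset S ⊆ 𝕊, the assignment K_S is a Grothendieck topology on the big cell 𝙳. That is: there exists a Grothendieck topology on the category 𝙳 whose covering sieves on an object n are exactly the sieves L on n such that for every supernatural number s ∈ S with n ∣ s there exists m ∈ L with m ∣ s. -/
open Topology

open CategoryTheory

/-- The big cell: the category whose objects are the positive natural numbers, with a
unique morphism `m ⟶ n` whenever `n ∣ m` (the opposite of the divisibility poset). -/
def BigCell : Type := ℕ+

/-- The underlying positive natural number of an object of the big cell. -/
def BigCell.d : BigCell → ℕ+ := fun x => x

/-- The object of the big cell corresponding to a positive natural number. -/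
def BigCell.of : ℕ+ → BigCell := fun x => x

/-- `m ≤ n` in the big cell iff `n ∣ m`; the induced category has a unique
morphism `m ⟶ n` whenever `n ∣ m`. -/
instance : Preorder BigCell where
  le m n := n.d ∣ m.d
  le_refl _ := dvd_refl _
  le_trans _ _ _ hab hbc := dvd_trans hbc hab

lemma natToSuper_dvd_of_dvd {a b : ℕ+} (h : a ∣ b) : natToSuper a ∣ natToSuper b := by
  intro p
  have : (a : ℕ).factorization ≤ (b : ℕ).factorization :=
    (Nat.factorization_le_iff_dvd a.ne_zero b.ne_zero).mpr (PNat.dvd_iff.mp h)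
  show ((a : ℕ).factorization p : ℕ∞) ≤ ((b : ℕ).factorization p : ℕ∞)
  exact_mod_cast this p

lemma natToSuper_lcm_dvd_s6 {a b : ℕ+} {s : Supernatural} (ha : natToSuper a ∣ s)
    (hb : natToSuper b ∣ s) : natToSuper (PNat.lcm a b) ∣ s := by
  intro p
  have hl : ((PNat.lcm a b : ℕ+) : ℕ).factorization =
      (a : ℕ).factorization ⊔ (b : ℕ).factorization := by
    rw [PNat.lcm_coe, Nat.factorization_lcm a.ne_zero b.ne_zero]
  show (((PNat.lcm a b : ℕ+) : ℕ).factorization p : ℕ∞) ≤ s p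
  rw [hl, Finsupp.sup_apply]
  exact sup_le (ha p) (hb p)

theorem stmt6 (S : Set Supernatural) :
    ∃ J : GrothendieckTopology BigCell, ∀ (n : BigCell) (L : Sieve n),
      L ∈ J.sieves n ↔
        ∀ s ∈ S, natToSuper n.d ∣ s →
          ∃ (m : BigCell) (f : m ⟶ n), L.arrows f ∧ natToSuper m.d ∣ s := by
  refine ⟨{
    sieves := fun n => {L | ∀ s ∈ S, natToSuper n.d ∣ s →
      ∃ (m : BigCell) (f : m ⟶ n), L.arrows f ∧ natToSuper m.d ∣ s},
    top_mem' := fun n s hs hns => ⟨n, 𝟙 n, trivial, hns⟩,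
    pullback_stable' := ?_,
    transitive' := ?_ }, fun n L => Iff.rfl⟩
  · intro n m L f hL s hs hms
    have hnm : n.d ∣ m.d := f.le
    have hns : natToSuper n.d ∣ s := fun p => le_trans (natToSuper_dvd_of_dvd hnm p) (hms p)
    obtain ⟨k, g, hg, hks⟩ := hL s hs hns
    have hkn : n.d ∣ k.d := g.le
    refine ⟨BigCell.of (PNat.lcm k.d m.d), homOfLE ?_, ?_, natToSuper_lcm_dvd_s6 hks hms⟩
    · exact PNat.dvd_lcm_right k.d m.d
    · show L.arrows (homOfLE _ ≫ f)
      have : L.arrows ((homOfLE (PNat.dvd_lcm_left k.d m.d) :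
          BigCell.of (PNat.lcm k.d m.d) ⟶ k) ≫ g) := L.downward_closed hg _
      convert this using 1
      exact Subsingleton.elim _ _
  · intro n L hL R hR s hs hns
    obtain ⟨m, f, hf, hms⟩ := hL s hs hns
    obtain ⟨k, g, hg, hks⟩ := hR hf s hs hms
    exact ⟨k, g ≫ f, hg, hks⟩
end

section
/- 𝕊 with the localic topology is a spectral space; explicitly: (1) 𝕊 is T0 and compact; (2) the compact open subsets form a basis of the topology; (3) the intersection of two compact open subsets is compact; (4) 𝕊 is quasi-sober, i.e., every nonempty irreducible closed subset has a generic point. -/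
open Topology

namespace SN

def B (n : ℕ+) : Set Supernatural := {s | natToSuper n ∣ s}

lemma mem_B {n : ℕ+} {s : Supernatural} :
    s ∈ B n ↔ ∀ p : Nat.Primes, ((n:ℕ).factorization (p:ℕ) : ℕ∞) ≤ s p := Iff.rfl

def ppow (p : Nat.Primes) (k : ℕ) : ℕ+ := ⟨(p:ℕ)^k, pow_pos p.2.pos k⟩

lemma mem_B_ppow {p : Nat.Primes} {k : ℕ} {s : Supernatural} :
    s ∈ B (ppow p k) ↔ (k:ℕ∞) ≤ s p := by
  have hf : ((p:ℕ)^k).factorization = Finsupp.single (p:ℕ) k := p.2.factorization_pow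
  constructor
  · intro h
    have := h p
    simpa [ppow, natToSuper, hf] using this
  · intro h q
    show ((((p:ℕ)^k).factorization q : ℕ∞)) ≤ s q
    rw [hf]
    rcases eq_or_ne (q:ℕ) (p:ℕ) with hq | hq
    · have : q = p := Subtype.ext hq
      subst this
      simpa using h
    · simp [Finsupp.single_apply, Ne.symm hq]

lemma B_one : B 1 = Set.univ := by
  ext s; simp [mem_B]

def plcm (m n : ℕ+) : ℕ+ := ⟨Nat.lcm m n, Nat.pos_of_ne_zero (Nat.lcm_ne_zero m.ne_zero n.ne_zero)⟩

lemma B_inter (m n : ℕ+) : B m ∩ B n = B (plcm m n) := by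
  ext s
  simp only [Set.mem_inter_iff, mem_B]
  have hl : ((plcm m n : ℕ+):ℕ).factorization = (m:ℕ).factorization ⊔ (n:ℕ).factorization :=
    Nat.factorization_lcm m.ne_zero n.ne_zero
  constructor
  · rintro ⟨h1, h2⟩ p
    rw [hl]
    simp only [Finsupp.sup_apply]
    exact_mod_cast max_le (h1 p) (h2 p)
  · intro h
    have h' : ∀ p : Nat.Primes, ((m:ℕ).factorization (p:ℕ) : ℕ∞) ≤ s p ∧
        ((n:ℕ).factorization (p:ℕ) : ℕ∞) ≤ s p := by
      intro p
      have := h p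
      rw [hl] at this
      simp only [Finsupp.sup_apply] at this
      exact ⟨le_trans (by exact_mod_cast le_sup_left) this,
        le_trans (by exact_mod_cast le_sup_right) this⟩
    exact ⟨fun p => (h' p).1, fun p => (h' p).2⟩

lemma isOpen_B (n : ℕ+) : IsOpen (B n) :=
  TopologicalSpace.GenerateOpen.basic _ ⟨n, rfl⟩

lemma basisB : TopologicalSpace.IsTopologicalBasis
    {U : Set Supernatural | ∃ n : ℕ+, U = {s | natToSuper n ∣ s}} := by
  refine ⟨?_, ?_, rfl⟩
  · rintro _ ⟨m, rfl⟩ _ ⟨n, rfl⟩ x hx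
    exact ⟨B (plcm m n), ⟨plcm m n, rfl⟩, (B_inter m n) ▸ hx, (B_inter m n).symm.subset⟩
  · apply Set.eq_univ_of_univ_subset
    intro x _
    exact Set.mem_sUnion.2 ⟨B 1, ⟨1, rfl⟩, by rw [B_one]; trivial⟩

lemma natToSuper_dvd_self (n : ℕ+) : natToSuper n ∣ natToSuper n := fun p => le_rfl

lemma dvd_trans' {a b c : Supernatural} (h1 : a ∣ b) (h2 : b ∣ c) : a ∣ c :=
  fun p => le_trans (h1 p) (h2 p)

lemma B_subset_of_open {n : ℕ+} {U : Set Supernatural} (hU : IsOpen U)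
    (hn : natToSuper n ∈ U) : B n ⊆ U := by
  obtain ⟨V, ⟨m, rfl⟩, hmV, hVU⟩ := basisB.exists_subset_of_mem_open hn hU
  intro s hs
  exact hVU (dvd_trans' hmV hs)

lemma isCompact_B (n : ℕ+) : IsCompact (B n) := by
  rw [isCompact_iff_finite_subcover]
  intro ι U hUo hcov
  have hn : natToSuper n ∈ B n := natToSuper_dvd_self n
  obtain ⟨i, hi⟩ := Set.mem_iUnion.1 (hcov hn)
  exact ⟨{i}, fun s hs => Set.mem_iUnion₂.2 ⟨i, Finset.mem_singleton_self i,
    B_subset_of_open (hUo i) hi hs⟩⟩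

end SN

namespace SN

lemma enat_ext {a b : ℕ∞} (h : ∀ k : ℕ, (k:ℕ∞) ≤ a ↔ (k:ℕ∞) ≤ b) : a = b := by
  have key : ∀ a b : ℕ∞, (∀ k : ℕ, (k:ℕ∞) ≤ a → (k:ℕ∞) ≤ b) → a ≤ b := by
    intro a b hab
    induction a using ENat.recTopCoe with
    | top =>
      by_contra hb
      have hb' : b ≠ ⊤ := fun h => hb (h ▸ le_rfl)
      lift b to ℕ using hb'
      have := hab (b+1) (le_top)
      exact absurd this (by exact_mod_cast Nat.not_succ_le_self b)
    | coe k => exact hab k le_rfl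
  exact le_antisymm (key a b fun k hk => (h k).1 hk) (key b a fun k hk => (h k).2 hk)

instance : T0Space Supernatural := by
  rw [t0Space_iff_inseparable]
  intro x y hxy
  funext p
  refine enat_ext fun k => ?_
  have := (inseparable_iff_forall_isOpen.1 hxy) _ (isOpen_B (ppow p k))
  simpa [mem_B_ppow] using this

lemma closure_singleton (t : Supernatural) : closure {t} = {s | s ∣ t} := by
  ext s
  rw [basisB.mem_closure_iff]
  constructor
  · intro h p
    by_contra hlt
    push_neg at hlt
    have htp : t p ≠ ⊤ := ne_top_of_lt hlt
    lift t p to ℕ using htp with k hk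
    have hs : s ∈ B (ppow p (k+1)) := by
      rw [mem_B_ppow]
      push_cast
      exact ENat.add_one_le_iff (by simp) |>.2 hlt
    obtain ⟨t', ht', rfl⟩ := h _ ⟨ppow p (k+1), rfl⟩ hs
    have ht'' := mem_B_ppow.1 (show t' ∈ B (ppow p (k+1)) from ht')
    rw [← hk] at ht''
    exact absurd ht'' (by exact_mod_cast Nat.not_succ_le_self k)
  · rintro hst o ⟨n, rfl⟩ hso
    exact ⟨t, dvd_trans' hso hst, rfl⟩

set_option maxHeartbeats 1000000 in
lemma exists_finset_of_compact_open {U : Set Supernatural} (hc : IsCompact U)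
    (ho : IsOpen U) : ∃ T : Finset {n : ℕ+ // B n ⊆ U}, U = ⋃ i ∈ T, B i.1 := by
  have hcov : U ⊆ ⋃ i : {n : ℕ+ // B n ⊆ U}, B i.1 := by
    intro x hx
    obtain ⟨V, ⟨n, rfl⟩, hxV, hVU⟩ := basisB.exists_subset_of_mem_open hx ho
    exact Set.mem_iUnion.2 ⟨⟨n, hVU⟩, hxV⟩
  obtain ⟨T, hT⟩ := hc.elim_finite_subcover (fun i : {n : ℕ+ // B n ⊆ U} => B i.1)
    (fun i => isOpen_B i.1) hcov
  refine ⟨T, Set.Subset.antisymm hT ?_⟩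
  exact Set.iUnion₂_subset fun i _ => i.2

lemma exists_of_le_iSup {ι : Sort*} {f : ι → ℕ∞} {c : ℕ} (hc : c ≠ 0)
    (h : (c:ℕ∞) ≤ ⨆ i, f i) : ∃ i, (c:ℕ∞) ≤ f i := by
  by_contra hcon
  push_neg at hcon
  have hle : ⨆ i, f i ≤ ((c-1 : ℕ) : ℕ∞) := by
    refine iSup_le fun i => ?_
    have hi := hcon i
    have hfi : f i ≠ ⊤ := ne_top_of_lt (lt_of_lt_of_le hi le_top)
    lift f i to ℕ using hfi with m
    exact_mod_cast Nat.le_sub_one_of_lt (by exact_mod_cast hi)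
  have := le_trans h hle
  have : c ≤ c - 1 := by exact_mod_cast this
  omega

lemma meet {S : Set Supernatural} (h : IsPreirreducible S) (hne : S.Nonempty)
    (P : Finset Nat.Primes) (e : Nat.Primes → ℕ)
    (hex : ∀ p ∈ P, ∃ u ∈ S, (e p : ℕ∞) ≤ u p) :
    ∃ u ∈ S, ∀ p ∈ P, (e p : ℕ∞) ≤ u p := by
  classical
  induction P using Finset.induction_on with
  | empty => obtain ⟨u, hu⟩ := hne; exact ⟨u, hu, fun p hp => absurd hp (Finset.notMem_empty p)⟩
  | @insert a P' _ ih =>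
    obtain ⟨u1, hu1S, hu1⟩ := ih (fun p hp => hex p (Finset.mem_insert_of_mem hp))
    obtain ⟨u2, hu2S, hu2⟩ := hex a (Finset.mem_insert_self _ _)
    have hUeq : {s : Supernatural | ∀ p ∈ P', (e p:ℕ∞) ≤ s p} = ⋂ p ∈ P', B (ppow p (e p)) := by
      ext s; simp [mem_B_ppow]
    have hU : IsOpen {s : Supernatural | ∀ p ∈ P', (e p:ℕ∞) ≤ s p} := by
      rw [hUeq]; exact isOpen_biInter_finset (fun p _ => isOpen_B _)
    obtain ⟨u, huS, hu⟩ := h _ _ hU (isOpen_B (ppow a (e a)))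
      ⟨u1, hu1S, hu1⟩ ⟨u2, hu2S, mem_B_ppow.2 hu2⟩
    refine ⟨u, huS, fun p hp => ?_⟩
    rcases Finset.mem_insert.1 hp with rfl | hp
    · exact mem_B_ppow.1 hu.2
    · exact hu.1 p hp

instance : QuasiSober Supernatural := by
  constructor
  intro S hirr hclosed
  set t : Supernatural := fun p => ⨆ u : S, (u : Supernatural) p with ht
  refine ⟨t, ?_⟩
  show closure {t} = S
  rw [closure_singleton]
  ext s
  constructor
  · intro hst
    rw [← hclosed.closure_eq, basisB.mem_closure_iff]
    rintro o ⟨n, rfl⟩ hso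
    set P : Finset Nat.Primes := (n:ℕ).primeFactors.subtype Nat.Prime with hP
    have hex : ∀ p ∈ P, ∃ u ∈ S, (((n:ℕ).factorization (p:ℕ) : ℕ) : ℕ∞) ≤ u p := by
      intro p hp
      have hpmem : (p:ℕ) ∈ (n:ℕ).primeFactors := by
        simpa [hP] using (Finset.mem_subtype.1 hp)
      have hpos : (n:ℕ).factorization (p:ℕ) ≠ 0 := by
        rw [← Nat.support_factorization] at hpmem
        exact Finsupp.mem_support_iff.1 hpmem
      have h1 : (((n:ℕ).factorization (p:ℕ) : ℕ) : ℕ∞) ≤ t p :=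
        le_trans (hso p) (hst p)
      obtain ⟨⟨u, huS⟩, hu⟩ := exists_of_le_iSup hpos (h1.trans_eq (by rw [ht]))
      exact ⟨u, huS, hu⟩
    obtain ⟨u, huS, hu⟩ := meet hirr.2 hirr.1 P _ hex
    refine ⟨u, ?_, huS⟩
    intro q
    by_cases hq : q ∈ P
    · exact hu q hq
    · have : (q:ℕ) ∉ (n:ℕ).primeFactors := fun hmem => hq (Finset.mem_subtype.2 hmem)
      rw [← Nat.support_factorization, Finsupp.notMem_support_iff] at this
      show (((n:ℕ).factorization (q:ℕ) : ℕ) : ℕ∞) ≤ u q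
      rw [this]
      simp
  · intro hs p
    exact le_iSup (fun u : S => (u : Supernatural) p) ⟨s, hs⟩

end SN

theorem stmt10 :
    T0Space Supernatural ∧ CompactSpace Supernatural ∧
    TopologicalSpace.IsTopologicalBasis
      {U : Set Supernatural | IsCompact U ∧ IsOpen U} ∧
    (∀ U V : Set Supernatural,
      IsCompact U → IsOpen U → IsCompact V → IsOpen V → IsCompact (U ∩ V)) ∧
    QuasiSober Supernatural := by
  refine ⟨inferInstance, ⟨by rw [← SN.B_one]; exact SN.isCompact_B 1⟩, ?_, ?_, inferInstance⟩
  · refine TopologicalSpace.isTopologicalBasis_of_isOpen_of_nhds (fun U hU => hU.2) ?_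
    intro a u ha hu
    obtain ⟨V, ⟨n, rfl⟩, haV, hVu⟩ := SN.basisB.exists_subset_of_mem_open ha hu
    exact ⟨SN.B n, ⟨SN.isCompact_B n, SN.isOpen_B n⟩, haV, hVu⟩
  · intro U V hUc hUo hVc hVo
    obtain ⟨T1, hT1⟩ := SN.exists_finset_of_compact_open hUc hUo
    obtain ⟨T2, hT2⟩ := SN.exists_finset_of_compact_open hVc hVo
    rw [hT1, hT2, Set.iUnion₂_inter]
    refine T1.isCompact_biUnion fun i _ => ?_
    rw [Set.inter_iUnion₂]
    refine T2.isCompact_biUnion fun j _ => ?_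
    rw [SN.B_inter]
    exact SN.isCompact_B _
end

section
/- Let S = 𝕊 \ {1}, where 1 is the supernatural number with all exponents 0, and let K_S be the associated Grothendieck topology on the big cell 𝙳. Then the sieve on the object 1 generated by all prime numbers (equivalently, the sieve consisting of all positive natural numbers m ≠ 1) is a K_S-covering sieve, but it contains no finitely generated K_S-covering sieve. -/
open Topology

open CategoryTheory

/-- The sieve on `n` generated by the finitely many positive natural numbers in `F`:
it contains a multiple `m` of `n` iff `m` is a multiple of some element of `F`.
The finitely generated sieves on `n` are exactly the sieves of this form. -/
def genSieve (n : BigCell) (F : Finset ℕ+) : Sieve n where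
  arrows m _ := ∃ m₀ ∈ F, m₀ ∣ m.d
  downward_closed := by
    rintro Y Z f ⟨m₀, hm₀, hdvd⟩ g
    exact ⟨m₀, hm₀, dvd_trans hdvd (leOfHom g)⟩

/-- The supernatural number `1`, with all exponents `0`. -/
def oneSuper : Supernatural := fun _ => 0

/-- The sieve on the object `1` of the big cell generated by all prime numbers;
equivalently, the sieve consisting of all positive natural numbers `m ≠ 1`. -/
def primeSieve : Sieve (BigCell.of 1) where
  arrows m _ := m.d ≠ 1
  downward_closed := by
    rintro Y Z f h g hZ
    exact h ((PNat.dvd_one_iff Y.d).mp (hZ ▸ leOfHom g))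

theorem stmt12 (J : GrothendieckTopology BigCell)
    (hJ : ∀ (n : BigCell) (L : Sieve n),
      L ∈ J.sieves n ↔ ∀ s : Supernatural, s ≠ oneSuper → natToSuper n.d ∣ s →
        ∃ (m : BigCell) (f : m ⟶ n), L.arrows f ∧ natToSuper m.d ∣ s) :
    primeSieve ∈ J.sieves (BigCell.of 1) ∧
      ¬ ∃ F : Finset ℕ+, genSieve (BigCell.of 1) F ≤ primeSieve ∧
          genSieve (BigCell.of 1) F ∈ J.sieves (BigCell.of 1) := by
  constructor
  · rw [hJ]
    intro s hs _
    have hq : ∃ q : Nat.Primes, s q ≠ 0 := by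
      by_contra h
      push_neg at h
      exact hs (funext fun q => h q)
    obtain ⟨q, hq⟩ := hq
    refine ⟨BigCell.of ⟨q.1, q.2.pos⟩, homOfLE (one_dvd _), ?_, ?_⟩
    · intro h
      have := congrArg PNat.val h
      exact q.2.one_lt.ne' this
    · intro p'
      show ((q.1.factorization p' : ℕ) : ℕ∞) ≤ s p'
      rcases eq_or_ne p' q with rfl | hne
      · rw [p'.2.factorization, Finsupp.single_eq_same]
        exact ENat.one_le_iff_ne_zero.mpr hq
      · rw [q.2.factorization, Finsupp.single_eq_of_ne'
          (fun h => hne (Subtype.ext h.symm))]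
        simp
  · rintro ⟨F, hle, hcov⟩
    have hFne : ∀ m₀ ∈ F, m₀ ≠ 1 := by
      intro m₀ hm₀
      exact hle (Y := BigCell.of m₀) (homOfLE (one_dvd _)) ⟨m₀, hm₀, dvd_refl _⟩
    set N : ℕ+ := ∏ m₀ ∈ F, m₀ with hN
    obtain ⟨p, hpN, hp⟩ := Nat.exists_infinite_primes ((N : ℕ) + 1)
    have hpgt : (N : ℕ) < p := hpN
    set P : Nat.Primes := ⟨p, hp⟩ with hP
    set s : Supernatural := fun q => if q = P then 1 else 0 with hs
    have hsne : s ≠ oneSuper := by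
      intro h
      have := congrFun h P
      simp [hs, oneSuper] at this
    rw [hJ] at hcov
    obtain ⟨m, f, ⟨m₀, hm₀F, hdvd⟩, hms⟩ := hcov s hsne (by
      intro q
      show (((BigCell.of 1).d : ℕ).factorization q : ℕ∞) ≤ s q
      simp [BigCell.of, BigCell.d])
    -- m.d divides p
    have hmp : (m.d : ℕ) ∣ p := by
      rw [← Nat.factorization_le_iff_dvd m.d.ne_zero hp.ne_zero]
      intro q
      by_cases hqp : q.Prime
      · have := hms ⟨q, hqp⟩
        rw [hs] at this
        simp only [natToSuper] at this
        by_cases hqP : (⟨q, hqp⟩ : Nat.Primes) = P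
        · have hq' : q = p := congrArg Subtype.val hqP
          subst hq'
          erw [if_pos hqP] at this
          have h1 : ((m.d : ℕ).factorization q : ℕ∞) ≤ (1 : ℕ) := by
            exact_mod_cast this
          rw [hp.factorization, Finsupp.single_eq_same]
          exact_mod_cast h1
        · erw [if_neg hqP] at this
          have h0 : (m.d : ℕ).factorization q = 0 := by
            exact_mod_cast le_antisymm (by exact_mod_cast this) zero_le
          simp [h0]
      · rw [Nat.factorization_eq_zero_of_not_prime _ hqp]
        exact zero_le
    have hm₀p : (m₀ : ℕ) ∣ p := dvd_trans (PNat.dvd_iff.mp hdvd) hmp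
    rcases (Nat.Prime.eq_one_or_self_of_dvd hp _ hm₀p) with h1 | hpm₀
    · exact hFne m₀ hm₀F (PNat.coe_eq_one_iff.mp h1)
    · have hdN : (m₀ : ℕ) ∣ (N : ℕ) := PNat.dvd_iff.mp (Finset.dvd_prod_of_mem _ hm₀F)
      rw [hpm₀] at hdN
      exact absurd (Nat.le_of_dvd N.pos hdN) (not_le.mpr hpgt)
end

section
/- For each prime p let s_p = ∏_{q prime, q ≠ p} q^∞ (exponent ∞ at every prime except p, exponent 0 at p), and let Ω = ∏_p p^∞. Then the subset X = {s_p : p prime} ∪ {Ω} of 𝕊, with the subspace topology induced by the localic topology, is homeomorphic to the prime spectrum Spec(ℤ) with the Zariski topology; moreover X is closed in the patch topology on 𝕊. -/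
open Topology

/-- The patch topology on `𝕊`, generated by the subbasis consisting of the sets
`(n) = {s : n ∣ s}` and their complements, for `n` a positive natural number. -/
def patchTopology : TopologicalSpace Supernatural :=
  .generateFrom
    ({U | ∃ n : ℕ+, U = {s | natToSuper n ∣ s}} ∪
     {U | ∃ n : ℕ+, U = {s | natToSuper n ∣ s}ᶜ})

/-- For a prime `p`, the supernatural number `s_p = ∏_{q ≠ p} q^∞`. -/
noncomputable def sP (p : Nat.Primes) : Supernatural :=
  fun q => if q = p then 0 else ⊤

/-- The subset `{s_p : p prime} ∪ {Ω}` of `𝕊`. -/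
def specZSet : Set Supernatural := {x | (∃ p : Nat.Primes, x = sP p) ∨ x = Omega}

namespace Stmt16Aux

lemma dvd_iff (s t : Supernatural) : s ∣ t ↔ ∀ p, s p ≤ t p := Iff.rfl

lemma sP_apply (p q : Nat.Primes) : sP p q = if q = p then 0 else ⊤ := rfl

lemma omega_apply (q : Nat.Primes) : Omega q = ⊤ := rfl

lemma natToSuper_apply (n : ℕ+) (q : Nat.Primes) :
    natToSuper n q = ((n : ℕ).factorization q : ℕ∞) := rfl

lemma dvd_omega (n : ℕ+) : natToSuper n ∣ Omega := fun _ => le_top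

lemma dvd_sP (n : ℕ+) (p : Nat.Primes) :
    natToSuper n ∣ sP p ↔ ¬ (p : ℕ) ∣ (n : ℕ) := by
  constructor
  · intro h hdvd
    have h1 := h p
    rw [natToSuper_apply, sP_apply, if_pos rfl] at h1
    have h2 : (n : ℕ).factorization p = 0 := by exact_mod_cast nonpos_iff_eq_zero.mp h1
    have := p.2.factorization_pos_of_dvd n.ne_zero hdvd
    omega
  · intro h q
    rw [natToSuper_apply, sP_apply]
    by_cases hq : q = p
    · subst hq
      rw [if_pos rfl, Nat.factorization_eq_zero_of_not_dvd h]
      simp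
    · rw [if_neg hq]; exact le_top

def ppow (p : Nat.Primes) (k : ℕ) : ℕ+ := ⟨(p : ℕ) ^ k, pow_pos p.2.pos k⟩

lemma dvd_ppow (p : Nat.Primes) (k : ℕ) (s : Supernatural) :
    natToSuper (ppow p k) ∣ s ↔ (k : ℕ∞) ≤ s p := by
  have hfac : ((p : ℕ) ^ k).factorization = Finsupp.single (p : ℕ) k :=
    Nat.Prime.factorization_pow p.2
  constructor
  · intro h
    have h1 := h p
    rw [natToSuper_apply] at h1
    simp only [ppow, PNat.mk_coe, hfac, Finsupp.single_apply, if_pos rfl] at h1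
    exact h1
  · intro h q
    rw [natToSuper_apply]
    simp only [ppow, PNat.mk_coe, hfac, Finsupp.single_apply]
    by_cases hq : (p : ℕ) = (q : ℕ)
    · have : q = p := Subtype.ext hq.symm
      subst this
      rw [if_pos rfl]; exact h
    · rw [if_neg hq]; simp

/-- The parametrization of `specZSet` by `Option Nat.Primes`. -/
noncomputable def F : Option Nat.Primes → Supernatural := fun o => o.elim Omega sP

lemma sP_ne_omega (p : Nat.Primes) : sP p ≠ Omega := by
  intro h
  have := congrFun h p
  rw [sP_apply, if_pos rfl, omega_apply] at this
  exact (by simp : (0 : ℕ∞) ≠ ⊤) this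

lemma sP_injective : Function.Injective sP := by
  intro p q h
  by_contra hpq
  have := congrFun h p
  rw [sP_apply, if_pos rfl, sP_apply, if_neg hpq] at this
  exact (by simp : (0 : ℕ∞) ≠ ⊤) this

lemma F_mem (o : Option Nat.Primes) : F o ∈ specZSet := by
  cases o with
  | none => exact Or.inr rfl
  | some p => exact Or.inl ⟨p, rfl⟩

lemma F_bijective : Function.Bijective (fun o => (⟨F o, F_mem o⟩ : specZSet)) := by
  constructor
  · intro o o' h
    have h' : F o = F o' := congrArg Subtype.val h
    cases o with
    | none => cases o' with
      | none => rfl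
      | some q => exact absurd h'.symm (sP_ne_omega q)
    | some p => cases o' with
      | none => exact absurd h' (sP_ne_omega p)
      | some q => exact congrArg some (sP_injective h')
  · rintro ⟨x, hx⟩
    rcases hx with ⟨p, rfl⟩ | rfl
    · exact ⟨some p, rfl⟩
    · exact ⟨none, rfl⟩

lemma prime_int (p : Nat.Primes) : Prime ((p : ℕ) : ℤ) := by
  rw [Int.prime_iff_natAbs_prime, Int.natAbs_natCast]; exact p.2

/-- The parametrization of `PrimeSpectrum ℤ` by `Option Nat.Primes`. -/
noncomputable def G : Option Nat.Primes → PrimeSpectrum ℤ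
  | none => ⟨⊥, Ideal.bot_prime⟩
  | some p => ⟨Ideal.span {((p : ℕ) : ℤ)},
      (Ideal.span_singleton_prime (prime_int p).ne_zero).mpr (prime_int p)⟩

lemma G_bijective : Function.Bijective G := by
  constructor
  · intro o o' h
    have h' : (G o).asIdeal = (G o').asIdeal := congrArg PrimeSpectrum.asIdeal h
    cases o with
    | none => cases o' with
      | none => rfl
      | some q =>
        exfalso
        exact (prime_int q).ne_zero (Ideal.span_singleton_eq_bot.mp h'.symm)
    | some p => cases o' with
      | none => exact absurd (Ideal.span_singleton_eq_bot.mp h') (prime_int p).ne_zero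
      | some q =>
        have := Ideal.span_singleton_eq_span_singleton.mp h'
        have hnat : (p : ℕ) = (q : ℕ) := by
          have := Int.associated_iff_natAbs.mp this
          simpa using this
        exact congrArg some (Subtype.ext hnat)
  · intro P
    by_cases hbot : P.asIdeal = ⊥
    · exact ⟨none, PrimeSpectrum.ext hbot.symm⟩
    · have hprin : P.asIdeal.IsPrincipal := inferInstance
      have hprime : Prime (Submodule.IsPrincipal.generator P.asIdeal) :=
        Submodule.IsPrincipal.prime_generator_of_isPrime P.asIdeal hbot
      set g := Submodule.IsPrincipal.generator P.asIdeal with hg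
      have hnp : Nat.Prime g.natAbs := Int.prime_iff_natAbs_prime.mp hprime
      refine ⟨some ⟨g.natAbs, hnp⟩, PrimeSpectrum.ext ?_⟩
      show Ideal.span {((g.natAbs : ℕ) : ℤ)} = P.asIdeal
      rw [Int.span_natAbs]
      exact Submodule.IsPrincipal.span_singleton_generator P.asIdeal

/-- The equivalence of `specZSet` with `PrimeSpectrum ℤ`. -/
noncomputable def e : specZSet ≃ PrimeSpectrum ℤ :=
  (Equiv.ofBijective _ F_bijective).symm.trans (Equiv.ofBijective G G_bijective)

lemma e_apply (o : Option Nat.Primes) (h : F o ∈ specZSet) : e ⟨F o, h⟩ = G o := by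
  unfold e
  rw [Equiv.trans_apply]
  have h1 : (Equiv.ofBijective _ F_bijective).symm (⟨F o, h⟩ : specZSet) = o :=
    ((Equiv.ofBijective _ F_bijective).symm_apply_eq).mpr rfl
  rw [h1]
  rfl

lemma e_sP (p : Nat.Primes) (h : sP p ∈ specZSet) : e ⟨sP p, h⟩ = G (some p) :=
  e_apply (some p) h

lemma e_omega (h : Omega ∈ specZSet) : e ⟨Omega, h⟩ = G none :=
  e_apply none h

/-- The key preimage computation. -/
lemma key (n : ℕ+) :
    e ⁻¹' (PrimeSpectrum.basicOpen (((n : ℕ) : ℤ)) : Set (PrimeSpectrum ℤ)) =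
      Subtype.val ⁻¹' {s | natToSuper n ∣ s} := by
  ext ⟨x, hx⟩
  simp only [Set.mem_preimage, SetLike.mem_coe, PrimeSpectrum.mem_basicOpen, Set.mem_setOf_eq]
  rcases hx with ⟨p, rfl⟩ | rfl
  · erw [e_sP]
    show ((n : ℕ) : ℤ) ∉ Ideal.span {((p : ℕ) : ℤ)} ↔ _
    rw [Ideal.mem_span_singleton, Int.natCast_dvd_natCast, dvd_sP]
  · erw [e_omega]
    show ((n : ℕ) : ℤ) ∉ (⊥ : Ideal ℤ) ↔ _
    simp only [Ideal.mem_bot, Int.natCast_eq_zero]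
    simp [n.ne_zero, dvd_omega n]

lemma localic_open (n : ℕ+) : IsOpen {s : Supernatural | natToSuper n ∣ s} :=
  TopologicalSpace.isOpen_generateFrom_of_mem ⟨n, rfl⟩

lemma continuous_e : Continuous e := by
  rw [PrimeSpectrum.isTopologicalBasis_basic_opens.continuous_iff]
  rintro _ ⟨a, rfl⟩
  show IsOpen (e ⁻¹' (PrimeSpectrum.basicOpen a : Set (PrimeSpectrum ℤ)))
  by_cases ha : a = 0
  · subst ha
    rw [PrimeSpectrum.basicOpen_zero]
    simp
  · have habs : (PrimeSpectrum.basicOpen a : Set (PrimeSpectrum ℤ)) =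
        (PrimeSpectrum.basicOpen ((a.natAbs : ℕ) : ℤ) : Set (PrimeSpectrum ℤ)) := by
      ext P
      simp only [SetLike.mem_coe, PrimeSpectrum.mem_basicOpen]
      rcases Int.natAbs_eq a with h | h
      · rw [← h]
      · rw [← Int.neg_neg (a.natAbs : ℤ), ← h, Ideal.neg_mem_iff]
    have hpos : 0 < a.natAbs := Int.natAbs_pos.mpr ha
    have hEq : e ⁻¹' (PrimeSpectrum.basicOpen a : Set (PrimeSpectrum ℤ)) =
        Subtype.val ⁻¹' {s | natToSuper ⟨a.natAbs, hpos⟩ ∣ s} := by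
      rw [habs]
      exact key ⟨a.natAbs, hpos⟩
    rw [hEq]
    exact (localic_open _).preimage continuous_subtype_val

lemma continuous_e_symm : Continuous e.symm := by
  apply continuous_induced_rng.mpr
  show Continuous[_, TopologicalSpace.generateFrom {U | ∃ n : ℕ+, U = {s | natToSuper n ∣ s}}]
    ((Subtype.val : specZSet → Supernatural) ∘ e.symm)
  rw [continuous_generateFrom_iff]
  rintro _ ⟨n, rfl⟩
  have : (Subtype.val ∘ e.symm) ⁻¹' {s | natToSuper n ∣ s} =
      (PrimeSpectrum.basicOpen (((n : ℕ) : ℤ)) : Set (PrimeSpectrum ℤ)) := by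
    rw [Set.preimage_comp, ← key n, Set.preimage_preimage]
    simp
  rw [this]
  exact (PrimeSpectrum.basicOpen _).isOpen

/-- The homeomorphism. -/
noncomputable def homeo : specZSet ≃ₜ PrimeSpectrum ℤ :=
  ⟨e, continuous_e, continuous_e_symm⟩

/-! ### The patch-closedness -/

lemma patch_open_basic (n : ℕ+) : IsOpen[patchTopology] {s | natToSuper n ∣ s} :=
  TopologicalSpace.GenerateOpen.basic _ (Or.inl ⟨n, rfl⟩)

lemma patch_open_compl (n : ℕ+) : IsOpen[patchTopology] {s | natToSuper n ∣ s}ᶜ :=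
  TopologicalSpace.GenerateOpen.basic _ (Or.inr ⟨n, rfl⟩)

lemma enat_cases (x : ℕ∞) : x = 0 ∨ x = ⊤ ∨ ∃ k : ℕ, x = ((k + 1 : ℕ) : ℕ∞) := by
  cases x with
  | top => exact Or.inr (Or.inl rfl)
  | coe m =>
    cases m with
    | zero => exact Or.inl rfl
    | succ k => exact Or.inr (Or.inr ⟨k, rfl⟩)

lemma compl_eq :
    specZSetᶜ =
      (⋃ p : Nat.Primes, ⋃ k : ℕ,
        {s : Supernatural | natToSuper (ppow p (k + 1)) ∣ s} ∩
        {s : Supernatural | natToSuper (ppow p (k + 2)) ∣ s}ᶜ) ∪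
      (⋃ p : Nat.Primes, ⋃ q : Nat.Primes, ⋃ _ : p ≠ q,
        {s : Supernatural | natToSuper (ppow p 1) ∣ s}ᶜ ∩
        {s : Supernatural | natToSuper (ppow q 1) ∣ s}ᶜ) := by
  ext s
  simp only [Set.mem_compl_iff, Set.mem_union, Set.mem_iUnion, Set.mem_inter_iff,
    Set.mem_setOf_eq, dvd_ppow]
  constructor
  · intro hs
    by_contra hc
    push_neg at hc
    obtain ⟨h1, h2⟩ := hc
    -- every coordinate is 0 or ⊤
    have hall : ∀ p : Nat.Primes, s p = 0 ∨ s p = ⊤ := by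
      intro p
      rcases enat_cases (s p) with h | h | ⟨k, h⟩
      · exact Or.inl h
      · exact Or.inr h
      · exfalso
        have := h1 p k (le_of_eq h.symm)
        rw [h] at this
        have : (k + 2 : ℕ) ≤ (k + 1 : ℕ) := by exact_mod_cast this
        omega
    -- at most one coordinate is 0
    have huniq : ∀ p q : Nat.Primes, s p = 0 → s q = 0 → p = q := by
      intro p q hp hq
      by_contra hpq
      have := h2 p q hpq (by rw [hp]; exact_mod_cast Nat.zero_lt_one)
      rw [hq] at this
      have : (1 : ℕ) ≤ (0 : ℕ) := by exact_mod_cast this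
      omega
    apply hs
    by_cases hz : ∃ p : Nat.Primes, s p = 0
    · obtain ⟨p, hp⟩ := hz
      refine Or.inl ⟨p, funext fun q => ?_⟩
      rw [sP_apply]
      by_cases hq : q = p
      · rw [if_pos hq, hq, hp]
      · rw [if_neg hq]
        rcases hall q with h | h
        · exact absurd (huniq q p h hp) hq
        · exact h
    · push_neg at hz
      refine Or.inr (funext fun q => ?_)
      rw [omega_apply]
      rcases hall q with h | h
      · exact absurd h (hz q)
      · exact h
  · rintro (⟨p, k, h1, h2⟩ | ⟨p, q, hpq, hp, hq⟩) hmem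
    · have hp0 : s p ≠ 0 := by
        intro h0
        rw [h0] at h1
        have : (k + 1 : ℕ) ≤ (0 : ℕ) := by exact_mod_cast h1
        omega
      have hptop : s p ≠ ⊤ := fun ht => h2 (ht ▸ le_top)
      have hor : s p = 0 ∨ s p = ⊤ := by
        rcases hmem with ⟨r, rfl⟩ | rfl
        · rw [sP_apply]
          by_cases h : p = r
          · exact Or.inl (if_pos h)
          · exact Or.inr (if_neg h)
        · exact Or.inr rfl
      rcases hor with h | h
      · exact hp0 h
      · exact hptop h
    · have hzero : ∀ r : Nat.Primes, s r < ((1 : ℕ) : ℕ∞) → s r = 0 := by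
        intro r hr
        rcases enat_cases (s r) with h | h | ⟨k, h⟩
        · exact h
        · rw [h] at hr; exact absurd hr (not_lt.mpr le_top)
        · rw [h] at hr
          have : (k + 1 : ℕ) < (1 : ℕ) := by exact_mod_cast hr
          omega
      have hp0 : s p = 0 := hzero p (not_le.mp hp)
      have hq0 : s q = 0 := hzero q (not_le.mp hq)
      rcases hmem with ⟨r, rfl⟩ | rfl
      · have h1 : p = r := by
          by_contra h
          rw [sP_apply, if_neg h] at hp0
          exact (by simp : (⊤ : ℕ∞) ≠ 0) hp0
        have h2 : q = r := by
          by_contra h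
          rw [sP_apply, if_neg h] at hq0
          exact (by simp : (⊤ : ℕ∞) ≠ 0) hq0
        exact hpq (h1.trans h2.symm)
      · exact (by simp : (⊤ : ℕ∞) ≠ 0) hp0

lemma patch_open_compl_set : IsOpen[patchTopology] specZSetᶜ := by
  rw [compl_eq]
  letI : TopologicalSpace Supernatural := patchTopology
  apply IsOpen.union
  · apply isOpen_iUnion
    intro p
    apply isOpen_iUnion
    intro k
    exact (patch_open_basic _).inter (patch_open_compl _)
  · apply isOpen_iUnion
    intro p
    apply isOpen_iUnion
    intro q
    apply isOpen_iUnion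
    intro _
    exact (patch_open_compl _).inter (patch_open_compl _)

lemma patch_closed : IsClosed[patchTopology] specZSet :=
  @IsClosed.mk _ patchTopology _ patch_open_compl_set

end Stmt16Aux

theorem stmt16 :
    Nonempty (specZSet ≃ₜ PrimeSpectrum ℤ) ∧ IsClosed[patchTopology] specZSet :=
  ⟨⟨Stmt16Aux.homeo⟩, Stmt16Aux.patch_closed⟩
end

section
/- Every finite T0 topological space is homeomorphic to a patch of 𝕊: for every finite topological space X satisfying the T0 separation axiom, there exists a topological embedding of X into 𝕊 (with the localic topology) whose image is closed in the patch topology on 𝕊. -/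
open Topology

lemma super_dvd_iff (s t : Supernatural) : s ∣ t ↔ ∀ p, s p ≤ t p := Iff.rfl

lemma natToSuper_primePow (p : Nat.Primes) (k : ℕ) (h : 0 < (p : ℕ) ^ k) (q : Nat.Primes) :
    natToSuper ⟨(p : ℕ) ^ k, h⟩ q = if p = q then (k : ℕ∞) else 0 := by
  show (((p : ℕ) ^ k).factorization (q : ℕ) : ℕ∞) = _
  rw [p.2.factorization_pow, Finsupp.single_apply]
  by_cases hpq : p = q
  · simp [hpq]
  · have : (p : ℕ) ≠ (q : ℕ) := fun h' => hpq (Subtype.ext h')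
    simp [hpq, this]

lemma natToSuper_prime (p : Nat.Primes) (h : 0 < (p : ℕ)) (q : Nat.Primes) :
    natToSuper ⟨(p : ℕ), h⟩ q = if p = q then 1 else 0 := by
  have := natToSuper_primePow p 1 (by simpa using h) q
  simpa using this

/-- separation of distinct points by patch-open sets -/
lemma patch_sep {s t : Supernatural} (h : s ≠ t) :
    ∃ U : Set Supernatural, patchTopology.IsOpen U ∧ t ∈ U ∧ s ∉ U := by
  obtain ⟨p, hp⟩ := Function.ne_iff.mp h
  rcases lt_or_gt_of_ne hp with hlt | hgt
  · -- s p < t p : use a basic open (p^(m+1))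
    have hne : s p ≠ ⊤ := (lt_of_lt_of_le hlt le_top).ne
    obtain ⟨m, hm⟩ := WithTop.ne_top_iff_exists.mp hne
    have hpos : 0 < (p : ℕ) ^ (m + 1) := pow_pos p.2.pos _
    refine ⟨{u | natToSuper ⟨(p : ℕ) ^ (m + 1), hpos⟩ ∣ u}, ?_, ?_, ?_⟩
    · exact TopologicalSpace.GenerateOpen.basic _ (Or.inl ⟨_, rfl⟩)
    · intro q
      rw [natToSuper_primePow]
      by_cases hq : p = q
      · subst hq
        rw [if_pos rfl]
        have h1 : (m : ℕ∞) < t p := hm.trans_lt hlt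
        push_cast
        exact (ENat.add_one_le_iff (WithTop.coe_ne_top (a := m))).mpr h1
      · simp [hq]
    · intro hmem
      have hthis := hmem p
      rw [natToSuper_primePow, if_pos rfl, ← hm] at hthis
      push_cast at hthis
      exact absurd ((ENat.add_one_le_iff (WithTop.coe_ne_top (a := m))).mp hthis) (lt_irrefl _)
  · -- t p < s p : use complement of (p^(m+1))
    have hne : t p ≠ ⊤ := (lt_of_lt_of_le hgt le_top).ne
    obtain ⟨m, hm⟩ := WithTop.ne_top_iff_exists.mp hne
    have hpos : 0 < (p : ℕ) ^ (m + 1) := pow_pos p.2.pos _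
    refine ⟨{u | natToSuper ⟨(p : ℕ) ^ (m + 1), hpos⟩ ∣ u}ᶜ, ?_, ?_, ?_⟩
    · exact TopologicalSpace.GenerateOpen.basic _ (Or.inr ⟨_, rfl⟩)
    · intro hmem
      have hthis := hmem p
      rw [natToSuper_primePow, if_pos rfl, ← hm] at hthis
      push_cast at hthis
      exact absurd ((ENat.add_one_le_iff (WithTop.coe_ne_top (a := m))).mp hthis) (lt_irrefl _)
    · intro hmem
      apply hmem
      intro q
      rw [natToSuper_primePow]
      by_cases hq : p = q
      · subst hq
        rw [if_pos rfl]
        have h1 : (m : ℕ∞) < s p := hm.trans_lt hgt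
        push_cast
        exact (ENat.add_one_le_iff (WithTop.coe_ne_top (a := m))).mpr h1
      · simp [hq]

open Classical in
noncomputable def sepSet (s t : Supernatural) : Set Supernatural :=
  if h : s ≠ t then (patch_sep h).choose else Set.univ

lemma sepSet_open (s t : Supernatural) : patchTopology.IsOpen (sepSet s t) := by
  unfold sepSet
  split
  · exact (patch_sep ‹_›).choose_spec.1
  · exact patchTopology.isOpen_univ

lemma sepSet_mem {s t : Supernatural} (h : s ≠ t) : t ∈ sepSet s t := by
  unfold sepSet; rw [dif_pos h]; exact (patch_sep h).choose_spec.2.1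

lemma sepSet_not_mem {s t : Supernatural} (h : s ≠ t) : s ∉ sepSet s t := by
  unfold sepSet; rw [dif_pos h]; exact (patch_sep h).choose_spec.2.2

lemma patch_finite_closed {F : Set Supernatural} (hF : F.Finite) :
    IsClosed[patchTopology] F := by
  letI : TopologicalSpace Supernatural := patchTopology
  rw [← isOpen_compl_iff]
  have key : Fᶜ = ⋃ t ∈ Fᶜ, ⋂ s ∈ F, sepSet s t := by
    ext x
    constructor
    · intro hx
      refine Set.mem_biUnion hx ?_
      exact Set.mem_biInter fun s hs => sepSet_mem (fun he => hx (he ▸ hs))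
    · rintro hx hxF
      obtain ⟨t, ht, hmem⟩ := Set.mem_iUnion₂.mp hx
      have := Set.mem_iInter₂.mp hmem x hxF
      exact sepSet_not_mem (fun he : x = t => ht (he ▸ hxF)) this
  rw [key]
  exact isOpen_biUnion fun t _ => hF.isOpen_biInter fun s _ => sepSet_open s t

theorem stmt18 (X : Type*) [TopologicalSpace X] [Finite X] [T0Space X] :
    ∃ f : X → Supernatural, IsEmbedding f ∧ IsClosed[patchTopology] (Set.range f) := by
  classical
  obtain ⟨ι₀, hι₀⟩ := Countable.exists_injective_nat (Set X)
  set ι : Set X → Nat.Primes := fun U => Infinite.natEmbedding Nat.Primes (ι₀ U) with hι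
  have hιinj : Function.Injective ι := (Infinite.natEmbedding Nat.Primes).injective.comp hι₀
  set f : X → Supernatural := fun x q =>
    if ∃ U : Set X, IsOpen U ∧ x ∈ U ∧ ι U = q then 1 else 0 with hf
  have hf01 : ∀ x q, f x q = 0 ∨ f x q = 1 := by
    intro x q
    by_cases h : ∃ U : Set X, IsOpen U ∧ x ∈ U ∧ ι U = q
    · right; simp [hf, h]
    · left; simp [hf, h]
  have hf1 : ∀ x q, (1 : ℕ∞) ≤ f x q ↔ ∃ U : Set X, IsOpen U ∧ x ∈ U ∧ ι U = q := by
    intro x q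
    by_cases h : ∃ U : Set X, IsOpen U ∧ x ∈ U ∧ ι U = q
    · simp [hf, h]
    · simp [hf, h]
  have hfU : ∀ (U : Set X), IsOpen U → ∀ x, ((1 : ℕ∞) ≤ f x (ι U) ↔ x ∈ U) := by
    intro U hU x
    rw [hf1]
    constructor
    · rintro ⟨U', hU', hx', he⟩
      rwa [← hιinj he]
    · intro hx
      exact ⟨U, hU, hx, rfl⟩
  have hinj : Function.Injective f := by
    intro x y hxy
    by_contra hne
    obtain ⟨U, hU, hxor⟩ := exists_isOpen_xor'_mem hne
    rcases hxor with ⟨hx, hy⟩ | ⟨hy, hx⟩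
    · have h1 := (hfU U hU x).mpr hx
      rw [hxy] at h1
      exact hy ((hfU U hU y).mp h1)
    · have h1 := (hfU U hU y).mpr hy
      rw [← hxy] at h1
      exact hx ((hfU U hU x).mp h1)
  have hopen1 : ∀ q, IsOpen {x | (1 : ℕ∞) ≤ f x q} := by
    intro q
    have : {x | (1 : ℕ∞) ≤ f x q} = ⋃ (U : Set X) (_ : IsOpen U ∧ ι U = q), U := by
      ext x
      simp only [Set.mem_setOf_eq, Set.mem_iUnion, hf1]
      constructor
      · rintro ⟨U, hU, hx, hq⟩; exact ⟨U, ⟨hU, hq⟩, hx⟩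
      · rintro ⟨U, ⟨hU, hq⟩, hx⟩; exact ⟨U, hU, hx, hq⟩
    rw [this]
    exact isOpen_iUnion fun U => isOpen_iUnion fun h => h.1
  have hcont : Continuous f := by
    apply continuous_generateFrom_iff.mpr
    rintro V ⟨n, rfl⟩
    have hpre : f ⁻¹' {s | natToSuper n ∣ s} =
        ⋂ q ∈ {q : Nat.Primes | (n : ℕ).factorization q ≠ 0}, {x | natToSuper n q ≤ f x q} := by
      ext x
      simp only [Set.mem_preimage, Set.mem_iInter, Set.mem_setOf_eq]
      constructor
      · intro h q _; exact h q
      · intro h q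
        by_cases hq : (n : ℕ).factorization (q : ℕ) = 0
        · show (((n : ℕ).factorization (q : ℕ) : ℕ∞)) ≤ f x q
          rw [hq]; exact_mod_cast zero_le
        · exact h q hq
    rw [hpre]
    have hfin : {q : Nat.Primes | (n : ℕ).factorization q ≠ 0}.Finite := by
      have hsub : {q : Nat.Primes | (n : ℕ).factorization q ≠ 0} ⊆
          (fun q : Nat.Primes => (q : ℕ)) ⁻¹' ((n : ℕ).factorization.support : Set ℕ) := by
        intro q hq
        simp only [Set.mem_preimage, Finset.mem_coe, Finsupp.mem_support_iff]
        exact hq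
      exact (Set.Finite.preimage (Set.injOn_of_injective (fun a b h => Subtype.ext h))
        (Finset.finite_toSet _)).subset hsub
    refine hfin.isOpen_biInter ?_
    intro q hq
    rcases hc : (n : ℕ).factorization (q : ℕ) with _ | _ | k
    · exact absurd hc hq
    · have : {x | natToSuper n q ≤ f x q} = {x | (1 : ℕ∞) ≤ f x q} := by
        ext x
        show (((n : ℕ).factorization (q : ℕ) : ℕ∞)) ≤ f x q ↔ _
        rw [hc]; norm_num
      rw [this]; exact hopen1 q
    · have : {x | natToSuper n q ≤ f x q} = ∅ := by
        ext x
        simp only [Set.mem_setOf_eq, Set.mem_empty_iff_false, iff_false]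
        intro hle
        have hle' : (((k + 1 + 1 : ℕ) : ℕ∞)) ≤ f x q := by
          have hval : natToSuper n q = (((k + 1 + 1 : ℕ) : ℕ∞)) := by
            show (((n : ℕ).factorization (q : ℕ) : ℕ)  : ℕ∞) = _
            rw [hc]
          rwa [hval] at hle
        rcases hf01 x q with h0 | h0 <;> rw [h0] at hle' <;>
          · have hcast : ((k : ℕ∞) + 1 + 1) ≤ 1 := le_trans (by push_cast; rfl) (hle'.trans (by norm_num))
            have h2 : (2 : ℕ∞) ≤ (k : ℕ∞) + 1 + 1 := by rw [add_assoc]; exact le_add_self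
            have := h2.trans hcast
            norm_num at this
      rw [this]; exact isOpen_empty
  have heq : ‹TopologicalSpace X› = TopologicalSpace.induced f localicTopology := by
    refine le_antisymm (continuous_iff_le_induced.mp hcont) ?_
    rw [TopologicalSpace.le_def]
    intro U hU
    rw [isOpen_induced_iff]
    refine ⟨{s | natToSuper ⟨((ι U : ℕ)), (ι U).2.pos⟩ ∣ s},
      TopologicalSpace.GenerateOpen.basic _ ⟨_, rfl⟩, ?_⟩
    ext x
    simp only [Set.mem_preimage, Set.mem_setOf_eq]
    constructor
    · intro h
      have := h (ι U)
      rw [natToSuper_prime, if_pos rfl] at this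
      exact (hfU U hU x).mp this
    · intro hx q
      rw [natToSuper_prime]
      by_cases hq : ι U = q
      · rw [if_pos hq]
        rw [← hq]
        exact (hfU U hU x).mpr hx
      · rw [if_neg hq]; exact zero_le
  exact ⟨f, ⟨⟨heq⟩, hinj⟩, patch_finite_closed (Set.finite_range f)⟩
end

section
/- Unions of chains of matrix algebras over ℂ are classified by their supernatural number: let A be an associative unital ℂ-algebra which is the union of an increasing chain of unital ℂ-subalgebras S₁ ⊆ S₂ ⊆ ⋯ with S_k isomorphic as a ℂ-algebra to the n_k × n_k matrix algebra M_{n_k}(ℂ), and let B similarly be the union of an increasing chain T₁ ⊆ T₂ ⊆ ⋯ with T_j ≅ M_{m_j}(ℂ). Then A and B are isomorphic as ℂ-algebras if and only if they have the same associated supernatural number, i.e., if and only if {d ∈ ℕ+ : d ∣ n_k for some k} = {d ∈ ℕ+ : d ∣ m_j for some j}. -/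
open Matrix

noncomputable section StmtAux19

/-- Matrix units. -/
def stmt19E (n : ℕ) (i j : Fin n) : Matrix (Fin n) (Fin n) ℂ := Matrix.single i j 1

lemma stmt19E_mul (n : ℕ) (i j k l : Fin n) :
    stmt19E n i j * stmt19E n k l = if j = k then stmt19E n i l else 0 := by
  unfold stmt19E
  split
  · subst ‹j = k›; rw [Matrix.single_mul_single_same, one_mul]
  · exact Matrix.single_mul_single_of_ne (h := ‹j ≠ k›) ..

lemma stmt19E_sum (n : ℕ) : ∑ i, stmt19E n i i = 1 := by
  ext a b
  simp only [Matrix.sum_apply, stmt19E, Matrix.single, Matrix.one_apply, Matrix.of_apply]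
  by_cases h : a = b
  · subst h; simp
  · simp [h, Finset.sum_ite_eq, fun i : Fin n => show ¬(i = a ∧ i = b) from
      fun ⟨h1, h2⟩ => h (h1 ▸ h2 ▸ rfl)]

lemma stmt19_sum_mulVec {ι : Type*} {p : ℕ} (s : Finset ι)
    (M : ι → Matrix (Fin p) (Fin p) ℂ) (v : Fin p → ℂ) :
    (∑ i ∈ s, M i) *ᵥ v = ∑ i ∈ s, M i *ᵥ v := by
  induction s using Finset.cons_induction with
  | empty => simp
  | cons a s ha ih => simp [Finset.sum_cons, Matrix.add_mulVec, ih]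

/-- Key dimension count: a unital algebra hom `Mₙ(ℂ) → Mₘ(ℂ)` gives
`m = n * finrank (range of image of E₀₀)`. -/
lemma stmt19_count {n m : ℕ} (hn : 0 < n)
    (f : Matrix (Fin n) (Fin n) ℂ →ₐ[ℂ] Matrix (Fin m) (Fin m) ℂ) :
    m = n * Module.finrank ℂ
      (LinearMap.range (Matrix.mulVecLin (f (stmt19E n ⟨0, hn⟩ ⟨0, hn⟩)))) := by
  set i0 : Fin n := ⟨0, hn⟩
  set V := LinearMap.range (Matrix.mulVecLin (f (stmt19E n i0 i0))) with hV
  have hmem : ∀ (i : Fin n) (v : Fin m → ℂ), (f (stmt19E n i0 i)).mulVec v ∈ V := by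
    intro i v
    refine ⟨(f (stmt19E n i0 i)).mulVec v, ?_⟩
    rw [Matrix.mulVecLin_apply, Matrix.mulVec_mulVec, ← _root_.map_mul, stmt19E_mul, if_pos rfl]
  have hfix : ∀ x : Fin m → ℂ, x ∈ V → (f (stmt19E n i0 i0)).mulVec x = x := by
    rintro x ⟨y, rfl⟩
    rw [Matrix.mulVecLin_apply, Matrix.mulVec_mulVec, ← _root_.map_mul, stmt19E_mul, if_pos rfl]
  let Φ : (Fin m → ℂ) →ₗ[ℂ] (Fin n → V) :=
    { toFun := fun v i => ⟨(f (stmt19E n i0 i)).mulVec v, hmem i v⟩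
      map_add' := fun v w => by
        funext i; apply Subtype.ext; simp [Matrix.mulVec_add]
      map_smul' := fun c v => by
        funext i; apply Subtype.ext; simp [Matrix.mulVec_smul] }
  let Ψ : (Fin n → V) →ₗ[ℂ] (Fin m → ℂ) :=
    { toFun := fun c => ∑ i, (f (stmt19E n i i0)).mulVec (c i : Fin m → ℂ)
      map_add' := fun c d => by
        simp [Matrix.mulVec_add, Finset.sum_add_distrib]
      map_smul' := fun r c => by
        simp [Matrix.mulVec_smul, Finset.smul_sum] }
  have h1 : ∀ v, Ψ (Φ v) = v := by
    intro v
    show ∑ i, (f (stmt19E n i i0)).mulVec ((f (stmt19E n i0 i)).mulVec v) = v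
    have e1 : ∀ i : Fin n, (f (stmt19E n i i0)).mulVec ((f (stmt19E n i0 i)).mulVec v)
        = (f (stmt19E n i i)).mulVec v := by
      intro i
      rw [Matrix.mulVec_mulVec, ← _root_.map_mul, stmt19E_mul, if_pos rfl]
    rw [Finset.sum_congr rfl fun i _ => e1 i, ← stmt19_sum_mulVec, ← map_sum,
      stmt19E_sum, _root_.map_one, Matrix.one_mulVec]
  have h2 : ∀ c, Φ (Ψ c) = c := by
    intro c
    funext i
    apply Subtype.ext
    show (f (stmt19E n i0 i)).mulVec (∑ j, (f (stmt19E n j i0)).mulVec (c j : Fin m → ℂ))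
      = (c i : Fin m → ℂ)
    rw [← Matrix.mulVecLin_apply, map_sum]
    have e2 : ∀ j : Fin n, (f (stmt19E n i0 i)).mulVecLin ((f (stmt19E n j i0)).mulVec (c j : Fin m → ℂ))
        = if i = j then (f (stmt19E n i0 i0)).mulVec (c j : Fin m → ℂ) else 0 := by
      intro j
      by_cases h : i = j
      · subst h
        rw [Matrix.mulVecLin_apply, Matrix.mulVec_mulVec, ← _root_.map_mul, stmt19E_mul,
          if_pos rfl, if_pos rfl]
      · rw [Matrix.mulVecLin_apply, Matrix.mulVec_mulVec, ← _root_.map_mul, stmt19E_mul,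
          if_neg h, if_neg h, map_zero, Matrix.zero_mulVec]
    simp only [e2]
    rw [Finset.sum_ite_eq, if_pos (Finset.mem_univ i), hfix _ (c i).2]
  -- now compare finranks
  have hVfd : FiniteDimensional ℂ V := inferInstance
  have heq : Module.finrank ℂ (Fin m → ℂ) = Module.finrank ℂ (Fin n → V) :=
    (LinearEquiv.ofLinear Ψ Φ (LinearMap.ext h1) (LinearMap.ext h2)).symm.finrank_eq
  rw [Module.finrank_fin_fun] at heq
  refine heq.trans ?_
  rw [Module.finrank_pi_fintype, Finset.sum_const, Finset.card_univ, Fintype.card_fin,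
    smul_eq_mul]

lemma stmt19_dvd_of_algHom {n m : ℕ} (hn : 0 < n)
    (f : Matrix (Fin n) (Fin n) ℂ →ₐ[ℂ] Matrix (Fin m) (Fin m) ℂ) : n ∣ m :=
  ⟨_, stmt19_count hn f⟩

lemma stmt19_mulVecLin_sum {ι : Type*} {p : ℕ} (s : Finset ι)
    (M : ι → Matrix (Fin p) (Fin p) ℂ) :
    (∑ i ∈ s, M i).mulVecLin = ∑ i ∈ s, (M i).mulVecLin := by
  induction s using Finset.cons_induction with
  | empty => simp
  | cons a s ha ih => simp [Finset.sum_cons, Matrix.mulVecLin_add, ih]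

set_option maxHeartbeats 1000000 in
/-- Skolem–Noether for matrix algebras over `ℂ`. -/
lemma stmt19_skolemNoether {n m : ℕ} (hn : 0 < n)
    (f g : Matrix (Fin n) (Fin n) ℂ →ₐ[ℂ] Matrix (Fin m) (Fin m) ℂ) :
    ∃ u : (Matrix (Fin m) (Fin m) ℂ)ˣ, ∀ a,
      g a = (u : Matrix (Fin m) (Fin m) ℂ) * f a * ((u⁻¹ : _ˣ) : Matrix (Fin m) (Fin m) ℂ) := by
  classical
  set i0 : Fin n := ⟨0, hn⟩
  set ε : Matrix (Fin m) (Fin m) ℂ ≃ₐ[ℂ] ((Fin m → ℂ) →ₗ[ℂ] (Fin m → ℂ)) :=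
    Matrix.toLinAlgEquiv' with hεdef
  have hε : ∀ M : Matrix (Fin m) (Fin m) ℂ, ε M = M.mulVecLin := by
    intro M; ext v; simp [hεdef, Matrix.toLinAlgEquiv'_apply, Matrix.mulVecLin_apply]
  set f' := ε.toAlgHom.comp f with hf'
  set g' := ε.toAlgHom.comp g with hg'
  set F : Fin n → Fin n → ((Fin m → ℂ) →ₗ[ℂ] (Fin m → ℂ)) := fun i j => f' (stmt19E n i j)
  set G : Fin n → Fin n → ((Fin m → ℂ) →ₗ[ℂ] (Fin m → ℂ)) := fun i j => g' (stmt19E n i j)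
  have hF : ∀ i j k l, F i j * F k l = if j = k then F i l else 0 := by
    intro i j k l
    rw [show F i j * F k l = f' (stmt19E n i j * stmt19E n k l) from (map_mul f' _ _).symm,
      stmt19E_mul]
    split <;> simp [F]
  have hG : ∀ i j k l, G i j * G k l = if j = k then G i l else 0 := by
    intro i j k l
    rw [show G i j * G k l = g' (stmt19E n i j * stmt19E n k l) from (map_mul g' _ _).symm,
      stmt19E_mul]
    split <;> simp [G]
  have hFsum : ∑ i, F i i = 1 := by
    rw [show ∑ i, F i i = f' (∑ i, stmt19E n i i) from (map_sum f' _ _).symm, stmt19E_sum,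
      _root_.map_one]
  have hGsum : ∑ i, G i i = 1 := by
    rw [show ∑ i, G i i = g' (∑ i, stmt19E n i i) from (map_sum g' _ _).symm, stmt19E_sum,
      _root_.map_one]
  set e := F i0 i0 with he
  set q := G i0 i0 with hq
  have hee : e * e = e := by rw [he, hF, if_pos rfl]
  have hqq : q * q = q := by rw [hq, hG, if_pos rfl]
  -- ranges have the same dimension
  have hre : e = (f (stmt19E n i0 i0)).mulVecLin := by rw [he]; exact hε _
  have hrq : q = (g (stmt19E n i0 i0)).mulVecLin := by rw [hq]; exact hε _
  have hrank : Module.finrank ℂ (LinearMap.range e) = Module.finrank ℂ (LinearMap.range q) := by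
    rw [hre, hrq]
    exact Nat.eq_of_mul_eq_mul_left hn ((stmt19_count hn f).symm.trans (stmt19_count hn g))
  have σ : (LinearMap.range e) ≃ₗ[ℂ] (LinearMap.range q) :=
    Classical.choice (FiniteDimensional.nonempty_linearEquiv_of_finrank_eq hrank)
  -- fixed point lemmas
  have hfixe : ∀ x : Fin m → ℂ, x ∈ LinearMap.range e → e x = x := by
    rintro x ⟨y, rfl⟩
    conv_lhs => rw [← Module.End.mul_apply, hee]
  have hfixq : ∀ x : Fin m → ℂ, x ∈ LinearMap.range q → q x = x := by
    rintro x ⟨y, rfl⟩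
    conv_lhs => rw [← Module.End.mul_apply, hqq]
  set w : (Fin m → ℂ) →ₗ[ℂ] (Fin m → ℂ) :=
    (LinearMap.range q).subtype ∘ₗ (σ : LinearMap.range e →ₗ[ℂ] LinearMap.range q)
      ∘ₗ e.rangeRestrict with hw
  set w' : (Fin m → ℂ) →ₗ[ℂ] (Fin m → ℂ) :=
    (LinearMap.range e).subtype ∘ₗ (σ.symm : LinearMap.range q →ₗ[ℂ] LinearMap.range e)
      ∘ₗ q.rangeRestrict with hw'
  have hwv : ∀ v, w v = ↑(σ ⟨e v, LinearMap.mem_range_self e v⟩) := fun v => rfl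
  have hw'v : ∀ v, w' v = ↑(σ.symm ⟨q v, LinearMap.mem_range_self q v⟩) := fun v => rfl
  have hwmem : ∀ v, w v ∈ LinearMap.range q := fun v => (σ ⟨e v, _⟩).2
  have hw'mem : ∀ v, w' v ∈ LinearMap.range e := fun v => (σ.symm ⟨q v, _⟩).2
  have hwe : w * e = w := by
    apply LinearMap.ext; intro v
    have hsub : (⟨e (e v), LinearMap.mem_range_self e _⟩ : LinearMap.range e)
        = ⟨e v, LinearMap.mem_range_self e v⟩ :=
      Subtype.ext (show e (e v) = e v by conv_lhs => rw [← Module.End.mul_apply, hee])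
    rw [Module.End.mul_apply, hwv, hwv, hsub]
  have hqw : q * w = w := by
    apply LinearMap.ext; intro v
    rw [Module.End.mul_apply]; exact hfixq _ (hwmem v)
  have hew' : e * w' = w' := by
    apply LinearMap.ext; intro v
    rw [Module.End.mul_apply]; exact hfixe _ (hw'mem v)
  have hw'q : w' * q = w' := by
    apply LinearMap.ext; intro v
    have hsub : (⟨q (q v), LinearMap.mem_range_self q _⟩ : LinearMap.range q)
        = ⟨q v, LinearMap.mem_range_self q v⟩ :=
      Subtype.ext (show q (q v) = q v by conv_lhs => rw [← Module.End.mul_apply, hqq])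
    rw [Module.End.mul_apply, hw'v, hw'v, hsub]
  have hww' : w * w' = q := by
    apply LinearMap.ext; intro v
    rw [Module.End.mul_apply, hwv]
    have h1 : (⟨e (w' v), LinearMap.mem_range_self e _⟩ : LinearMap.range e)
        = σ.symm ⟨q v, LinearMap.mem_range_self q v⟩ := by
      exact Subtype.ext ((hfixe _ (hw'mem v)).trans (hw'v v))
    rw [h1, σ.apply_symm_apply]
  have hw'w : w' * w = e := by
    apply LinearMap.ext; intro v
    rw [Module.End.mul_apply, hw'v]
    have h1 : (⟨q (w v), LinearMap.mem_range_self q _⟩ : LinearMap.range q)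
        = σ ⟨e v, LinearMap.mem_range_self e v⟩ := by
      exact Subtype.ext ((hfixq _ (hwmem v)).trans (hwv v))
    rw [h1, σ.symm_apply_apply]
  -- the intertwiner
  set u := ∑ i, G i i0 * w * F i0 i with hu
  set u' := ∑ i, F i i0 * w' * G i0 i with hu'
  have hc1 : ∀ k l, u * F k l = G k l * u := by
    intro k l
    rw [hu, Finset.sum_mul, Finset.mul_sum]
    have lhs : ∀ i : Fin n, G i i0 * w * F i0 i * F k l
        = if i = k then G k i0 * w * F i0 l else 0 := by
      intro i
      rw [mul_assoc (G i i0 * w), hF]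
      by_cases h : i = k
      · subst h; rw [if_pos rfl, if_pos rfl]
      · rw [if_neg h, if_neg h, mul_zero]
    have rhs : ∀ i : Fin n, G k l * (G i i0 * w * F i0 i)
        = if i = l then G k i0 * w * F i0 l else 0 := by
      intro i
      rw [← mul_assoc, ← mul_assoc, hG]
      by_cases h : i = l
      · subst h; rw [if_pos rfl, if_pos rfl]
      · rw [if_neg (fun hh => h hh.symm), if_neg h, zero_mul, zero_mul]
    simp only [lhs, rhs, Finset.sum_ite_eq', Finset.mem_univ, if_pos]
  have hc2 : ∀ k l, u' * G k l = F k l * u' := by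
    intro k l
    rw [hu', Finset.sum_mul, Finset.mul_sum]
    have lhs : ∀ i : Fin n, F i i0 * w' * G i0 i * G k l
        = if i = k then F k i0 * w' * G i0 l else 0 := by
      intro i
      rw [mul_assoc (F i i0 * w'), hG]
      by_cases h : i = k
      · subst h; rw [if_pos rfl, if_pos rfl]
      · rw [if_neg h, if_neg h, mul_zero]
    have rhs : ∀ i : Fin n, F k l * (F i i0 * w' * G i0 i)
        = if i = l then F k i0 * w' * G i0 l else 0 := by
      intro i
      rw [← mul_assoc, ← mul_assoc, hF]
      by_cases h : i = l
      · subst h; rw [if_pos rfl, if_pos rfl]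
      · rw [if_neg (fun hh => h hh.symm), if_neg h, zero_mul, zero_mul]
    simp only [lhs, rhs, Finset.sum_ite_eq', Finset.mem_univ, if_pos]
  have huw' : u * w' = q := by
    rw [hu, Finset.sum_mul]
    have term : ∀ i : Fin n, G i i0 * w * F i0 i * w' = if i = i0 then q else 0 := by
      intro i
      have hstep : F i0 i * w' = if i = i0 then w' else 0 := by
        rw [← hew', ← mul_assoc, hF]
        by_cases h : i = i0
        · subst h; rw [if_pos rfl, if_pos rfl, hew']
        · rw [if_neg h, if_neg h, zero_mul]
      rw [mul_assoc (G i i0 * w), hstep]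
      by_cases h : i = i0
      · subst h; rw [if_pos rfl, if_pos rfl, mul_assoc, hww', ← hq, hqq]
      · rw [if_neg h, if_neg h, mul_zero]
    simp only [term, Finset.sum_ite_eq', Finset.mem_univ, if_pos]
  have hu'w : u' * w = e := by
    rw [hu', Finset.sum_mul]
    have term : ∀ i : Fin n, F i i0 * w' * G i0 i * w = if i = i0 then e else 0 := by
      intro i
      have hstep : G i0 i * w = if i = i0 then w else 0 := by
        rw [← hqw, ← mul_assoc, hG]
        by_cases h : i = i0
        · subst h; rw [if_pos rfl, if_pos rfl, hqw]
        · rw [if_neg h, if_neg h, zero_mul]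
      rw [mul_assoc (F i i0 * w'), hstep]
      by_cases h : i = i0
      · subst h; rw [if_pos rfl, if_pos rfl, mul_assoc, hw'w, ← he, hee]
      · rw [if_neg h, if_neg h, mul_zero]
    simp only [term, Finset.sum_ite_eq', Finset.mem_univ, if_pos]
  have huu' : u * u' = 1 := by
    rw [hu', Finset.mul_sum]
    have term : ∀ i : Fin n, u * (F i i0 * w' * G i0 i) = G i i := by
      intro i
      calc u * (F i i0 * w' * G i0 i) = (u * F i i0) * w' * G i0 i := by
            rw [← mul_assoc, ← mul_assoc]
        _ = G i i0 * u * w' * G i0 i := by rw [hc1]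
        _ = G i i0 * (u * w') * G i0 i := by rw [mul_assoc (G i i0)]
        _ = G i i0 * q * G i0 i := by rw [huw']
        _ = G i i := by rw [hq, hG, if_pos rfl, hG, if_pos rfl]
    rw [Finset.sum_congr rfl fun i _ => term i, hGsum]
  have hu'u : u' * u = 1 := by
    rw [hu, Finset.mul_sum]
    have term : ∀ i : Fin n, u' * (G i i0 * w * F i0 i) = F i i := by
      intro i
      calc u' * (G i i0 * w * F i0 i) = (u' * G i i0) * w * F i0 i := by
            rw [← mul_assoc, ← mul_assoc]
        _ = F i i0 * u' * w * F i0 i := by rw [hc2]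
        _ = F i i0 * (u' * w) * F i0 i := by rw [mul_assoc (F i i0)]
        _ = F i i0 * e * F i0 i := by rw [hu'w]
        _ = F i i := by rw [he, hF, if_pos rfl, hF, if_pos rfl]
    rw [Finset.sum_congr rfl fun i _ => term i, hFsum]
  -- intertwining for all a
  have hint : ∀ a, u * f' a = g' a * u := by
    intro a
    conv_lhs => rw [matrix_eq_sum_single a]
    conv_rhs => rw [matrix_eq_sum_single a]
    have ha : ∀ i j : Fin n, Matrix.single i j (a i j) = a i j • stmt19E n i j := by
      intro i j
      rw [stmt19E, Matrix.smul_single, smul_eq_mul, mul_one]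
    simp only [ha, map_sum, _root_.map_smul, Finset.mul_sum, Finset.sum_mul, Finset.smul_sum]
    refine Finset.sum_congr rfl fun i _ => Finset.sum_congr rfl fun j _ => ?_
    rw [mul_smul_comm, smul_mul_assoc]
    congr 1
    exact hc1 i j
  -- transfer back to matrices
  set U := ε.symm u with hU
  set U' := ε.symm u' with hU'
  have hUU' : U * U' = 1 := by rw [hU, hU', ← _root_.map_mul, huu', _root_.map_one]
  have hU'U : U' * U = 1 := by rw [hU, hU', ← _root_.map_mul, hu'u, _root_.map_one]
  refine ⟨⟨U, U', hUU', hU'U⟩, fun a => ?_⟩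
  show g a = U * f a * U'
  have : ε (g a) = ε (U * f a * U') := by
    rw [_root_.map_mul, _root_.map_mul, hU, hU', ε.apply_symm_apply, ε.apply_symm_apply]
    have hga : ε (g a) = g' a := rfl
    have hfa : ε (f a) = f' a := rfl
    rw [hfa, hga]
    calc g' a = g' a * (u * u') := by rw [huu', mul_one]
      _ = (g' a * u) * u' := by rw [mul_assoc]
      _ = (u * f' a) * u' := by rw [hint]
      _ = u * f' a * u' := rfl
  exact ε.injective this

/-- Conjugation by a unit, as an algebra endomorphism. -/
def stmt19innerAut {R : Type*} [Ring R] [Algebra ℂ R] (u : Rˣ) : R →ₐ[ℂ] R where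
  toFun x := ↑u * x * ↑u⁻¹
  map_one' := by simp
  map_mul' x y := by simp [mul_assoc, Units.inv_mul_cancel_left]
  map_zero' := by simp
  map_add' x y := by simp [mul_add, add_mul]
  commutes' r := by
    simp [Algebra.algebraMap_eq_smul_one, mul_smul_comm, smul_mul_assoc]

open Kronecker in
/-- If `n ∣ m` there is a unital embedding of matrix algebras. -/
lemma stmt19_exists_embed {n m : ℕ} (h : n ∣ m) :
    Nonempty (Matrix (Fin n) (Fin n) ℂ →ₐ[ℂ] Matrix (Fin m) (Fin m) ℂ) := by
  have hk' : (m / n) * n = m := Nat.div_mul_cancel h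
  let kr : Matrix (Fin n) (Fin n) ℂ →ₐ[ℂ]
      Matrix (Fin (m / n) × Fin n) (Fin (m / n) × Fin n) ℂ :=
    { toFun := fun a => (1 : Matrix (Fin (m / n)) (Fin (m / n)) ℂ) ⊗ₖ a
      map_one' := Matrix.one_kronecker_one
      map_mul' := fun a b => by rw [← Matrix.mul_kronecker_mul, one_mul]
      map_zero' := Matrix.kronecker_zero _
      map_add' := fun a b => Matrix.kronecker_add _ _ _
      commutes' := fun r => by
        rw [Algebra.algebraMap_eq_smul_one, Algebra.algebraMap_eq_smul_one,
          Matrix.kronecker_smul, Matrix.one_kronecker_one] }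
  exact ⟨((Matrix.reindexAlgEquiv ℂ ℂ
    ((finProdFinEquiv : Fin (m / n) × Fin n ≃ Fin ((m / n) * n)).trans
      (finCongr hk'))).toAlgHom).comp kr⟩

/-- Divisibility from a unital algebra hom between algebras isomorphic to matrix algebras. -/
lemma stmt19_dvd_of_hom {C D : Type*} [Ring C] [Algebra ℂ C] [Ring D] [Algebra ℂ D]
    {p q : ℕ} (hp : 0 < p)
    (α : C ≃ₐ[ℂ] Matrix (Fin p) (Fin p) ℂ) (β : D ≃ₐ[ℂ] Matrix (Fin q) (Fin q) ℂ)
    (f : C →ₐ[ℂ] D) : p ∣ q :=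
  stmt19_dvd_of_algHom hp ((β.toAlgHom.comp f).comp α.symm.toAlgHom)

/-- The key extension step: a hom into `X` on `C` extends along any embedding `C → D`. -/
lemma stmt19_step {C D X : Type*} [Ring C] [Algebra ℂ C] [Ring D] [Algebra ℂ D]
    [Ring X] [Algebra ℂ X] {p q r : ℕ} (hp : 0 < p)
    (α : C ≃ₐ[ℂ] Matrix (Fin p) (Fin p) ℂ) (β : D ≃ₐ[ℂ] Matrix (Fin q) (Fin q) ℂ)
    (γ : X ≃ₐ[ℂ] Matrix (Fin r) (Fin r) ℂ)
    (hqr : q ∣ r) (ι : C →ₐ[ℂ] D) (f : C →ₐ[ℂ] X) :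
    ∃ g : D →ₐ[ℂ] X, ∀ c, g (ι c) = f c := by
  obtain ⟨e0⟩ := stmt19_exists_embed hqr
  let F1 : Matrix (Fin p) (Fin p) ℂ →ₐ[ℂ] Matrix (Fin r) (Fin r) ℂ :=
    (γ.toAlgHom.comp f).comp α.symm.toAlgHom
  let F2 : Matrix (Fin p) (Fin p) ℂ →ₐ[ℂ] Matrix (Fin r) (Fin r) ℂ :=
    ((e0.comp β.toAlgHom).comp ι).comp α.symm.toAlgHom
  obtain ⟨u, hu⟩ := stmt19_skolemNoether hp F2 F1
  refine ⟨γ.symm.toAlgHom.comp ((stmt19innerAut u).comp (e0.comp β.toAlgHom)), fun c => ?_⟩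
  have h1 : F2 (α c) = e0 (β (ι c)) := by
    show e0 (β (ι (α.symm (α c)))) = e0 (β (ι c))
    rw [α.symm_apply_apply]
  have h2 : F1 (α c) = γ (f c) := by
    show γ (f (α.symm (α c))) = γ (f c)
    rw [α.symm_apply_apply]
  show γ.symm ((u : Matrix (Fin r) (Fin r) ℂ) * e0 (β (ι c)) * ((u⁻¹ : _ˣ) : Matrix (Fin r) (Fin r) ℂ)) = f c
  rw [← h1, ← hu, h2, γ.symm_apply_apply]

/-- Forward direction: an isomorphism forces inclusion of the divisor sets. -/
lemma stmt19_subset {A B : Type*} [Ring A] [Algebra ℂ A] [Ring B] [Algebra ℂ B]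
    (S : ℕ → Subalgebra ℂ A) (T : ℕ → Subalgebra ℂ B) (hT : Monotone T)
    (hTB : ∀ b : B, ∃ j, b ∈ T j) (n m : ℕ → ℕ+)
    (hSn : ∀ k, Nonempty (S k ≃ₐ[ℂ] Matrix (Fin (n k)) (Fin (n k)) ℂ))
    (hTm : ∀ j, Nonempty (T j ≃ₐ[ℂ] Matrix (Fin (m j)) (Fin (m j)) ℂ))
    (Φ : A ≃ₐ[ℂ] B) :
    {d : ℕ+ | ∃ k, d ∣ n k} ⊆ {d : ℕ+ | ∃ j, d ∣ m j} := by
  rintro d ⟨k, hd⟩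
  obtain ⟨α⟩ := hSn k
  let ψ : Matrix (Fin (n k)) (Fin (n k)) ℂ →ₐ[ℂ] B :=
    (Φ.toAlgHom.comp (S k).val).comp α.symm.toAlgHom
  choose J hJ using fun pr : Fin (n k) × Fin (n k) => hTB (ψ (stmt19E (n k) pr.1 pr.2))
  classical
  set j0 := Finset.univ.sup J with hj0
  have hmemE : ∀ i j : Fin (n k), ψ (stmt19E (n k) i j) ∈ T j0 := fun i j =>
    hT (Finset.le_sup (Finset.mem_univ (i, j))) (hJ (i, j))
  have hmem : ∀ x, ψ x ∈ T j0 := by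
    intro x
    rw [matrix_eq_sum_single x, map_sum]
    refine sum_mem fun i _ => ?_
    rw [map_sum]
    refine sum_mem fun j _ => ?_
    have : Matrix.single i j (x i j) = x i j • stmt19E (n k) i j := by
      rw [stmt19E, Matrix.smul_single, smul_eq_mul, mul_one]
    rw [this, _root_.map_smul]
    exact (T j0).smul_mem (hmemE i j) _
  have hdvd : (n k : ℕ) ∣ (m j0 : ℕ) :=
    stmt19_dvd_of_hom (n k).pos AlgEquiv.refl (Classical.choice (hTm j0))
      (ψ.codRestrict (T j0) hmem)
  exact ⟨j0, hd.trans (PNat.dvd_iff.2 hdvd)⟩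

/-- Backward direction: equal divisor sets give an isomorphism. -/
lemma stmt19_construct {A B : Type*} [Ring A] [Algebra ℂ A] [Ring B] [Algebra ℂ B]
    (S : ℕ → Subalgebra ℂ A) (T : ℕ → Subalgebra ℂ B)
    (hS : Monotone S) (hT : Monotone T)
    (hSA : ∀ a : A, ∃ k, a ∈ S k) (hTB : ∀ b : B, ∃ j, b ∈ T j)
    (n m : ℕ → ℕ+)
    (hSn : ∀ k, Nonempty (S k ≃ₐ[ℂ] Matrix (Fin (n k)) (Fin (n k)) ℂ))
    (hTm : ∀ j, Nonempty (T j ≃ₐ[ℂ] Matrix (Fin (m j)) (Fin (m j)) ℂ))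
    (hsets : {d : ℕ+ | ∃ k, d ∣ n k} = {d : ℕ+ | ∃ j, d ∣ m j}) :
    Nonempty (A ≃ₐ[ℂ] B) := by
  classical
  -- choose explicit matrix models
  have α : ∀ k, (S k) ≃ₐ[ℂ] Matrix (Fin (n k)) (Fin (n k)) ℂ :=
    fun k => Classical.choice (hSn k)
  have β : ∀ j, (T j) ≃ₐ[ℂ] Matrix (Fin (m j)) (Fin (m j)) ℂ :=
    fun j => Classical.choice (hTm j)
  -- divisibility facts
  have hnmF : ∀ k, ∃ j, (n k : ℕ) ∣ (m j : ℕ) := by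
    intro k
    have : (n k : ℕ+) ∈ {d : ℕ+ | ∃ j, d ∣ m j} := hsets ▸ ⟨k, dvd_refl _⟩
    obtain ⟨j, hj⟩ := this
    exact ⟨j, PNat.dvd_iff.1 hj⟩
  have hmnF : ∀ j, ∃ k, (m j : ℕ) ∣ (n k : ℕ) := by
    intro j
    have : (m j : ℕ+) ∈ {d : ℕ+ | ∃ k, d ∣ n k} := hsets.symm ▸ ⟨j, dvd_refl _⟩
    obtain ⟨k, hk⟩ := this
    exact ⟨k, PNat.dvd_iff.1 hk⟩
  have hchainS : ∀ {k k'}, k ≤ k' → (n k : ℕ) ∣ (n k' : ℕ) := fun {k k'} h =>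
    stmt19_dvd_of_hom (n k).pos (α k) (α k') (Subalgebra.inclusion (hS h))
  have hchainT : ∀ {j j'}, j ≤ j' → (m j : ℕ) ∣ (m j' : ℕ) := fun {j j'} h =>
    stmt19_dvd_of_hom (m j).pos (β j) (β j') (Subalgebra.inclusion (hT h))
  -- packs
  let Pack := Σ (k : ℕ) (j : ℕ), {φ : (S k) →ₐ[ℂ] B // ∀ x, φ x ∈ T j}
  -- the step
  have stepEx : ∀ (p : Pack) (i : ℕ), ∃ (q : Pack) (ψ : (T p.2.1) →ₐ[ℂ] A),
      (i ≤ q.1) ∧ (i ≤ q.2.1) ∧ (p.1 ≤ q.1) ∧ (p.2.1 ≤ q.2.1) ∧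
      (∀ y, ψ y ∈ S q.1) ∧
      (∀ x : S p.1, ψ ⟨p.2.2.1 x, p.2.2.2 x⟩ = (x : A)) ∧
      (∀ (y : T p.2.1) (hy : ψ y ∈ S q.1), q.2.2.1 ⟨ψ y, hy⟩ = (y : B)) := by
    rintro ⟨k, j, φ, hφ⟩ i
    let φ' : (S k) →ₐ[ℂ] (T j) := φ.codRestrict (T j) hφ
    obtain ⟨K0, hK0⟩ := hmnF j
    set K := max K0 (max i k) with hKdef
    have hkK : k ≤ K := le_trans (le_max_right i k) (le_max_right K0 _)
    have hiK : i ≤ K := le_trans (le_max_left i k) (le_max_right K0 _)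
    have hdK : (m j : ℕ) ∣ (n K : ℕ) := hK0.trans (hchainS (le_max_left K0 _))
    obtain ⟨ψ0, hψ0⟩ := stmt19_step (n k).pos (α k) (β j) (α K) hdK φ'
      (Subalgebra.inclusion (hS hkK))
    obtain ⟨J0, hJ0⟩ := hnmF K
    set J := max J0 (max i j) with hJdef
    have hjJ : j ≤ J := le_trans (le_max_right i j) (le_max_right J0 _)
    have hiJ : i ≤ J := le_trans (le_max_left i j) (le_max_right J0 _)
    have hdJ : (n K : ℕ) ∣ (m J : ℕ) := hJ0.trans (hchainT (le_max_left J0 _))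
    obtain ⟨φ1, hφ1⟩ := stmt19_step (m j).pos (β j) (α K) (β J) hdJ ψ0
      (Subalgebra.inclusion (hT hjJ))
    refine ⟨⟨K, J, ⟨(T J).val.comp φ1, fun x => (φ1 x).2⟩⟩, (S K).val.comp ψ0,
      hiK, hiJ, hkK, hjJ, fun y => (ψ0 y).2, ?_, ?_⟩
    · intro x
      have h1 : (⟨φ x, hφ x⟩ : T j) = φ' x := Subtype.ext rfl
      show ((ψ0 (⟨φ x, hφ x⟩ : T j) : S K) : A) = (x : A)
      rw [h1, hψ0 x, Subalgebra.coe_inclusion]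
    · intro y hy
      have h1 : (⟨(S K).val.comp ψ0 y, hy⟩ : S K) = ψ0 y := Subtype.ext rfl
      show ((φ1 (⟨(S K).val.comp ψ0 y, hy⟩ : S K) : T J) : B) = (y : B)
      rw [h1, hφ1 y, Subalgebra.coe_inclusion]
  choose stepP stepψ hA1 hA2 hA3 hA4 hA5 hA6 hA7 using stepEx
  -- the base pack
  obtain ⟨j0, hd0⟩ := hnmF 0
  obtain ⟨e0⟩ := stmt19_exists_embed hd0
  let φ0 : (S 0) →ₐ[ℂ] B :=
    ((T j0).val.comp ((β j0).symm.toAlgHom.comp e0)).comp (α 0).toAlgHom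
  have hφ0 : ∀ x, φ0 x ∈ T j0 := fun x => ((β j0).symm (e0 (α 0 x))).2
  let p0 : Pack := ⟨0, j0, ⟨φ0, hφ0⟩⟩
  -- the sequence of packs
  let seq : ℕ → Pack := fun i => Nat.rec p0 (fun i p => stepP p (i + 1)) i
  have hseq : ∀ i, seq (i + 1) = stepP (seq i) (i + 1) := fun i => rfl
  set sk : ℕ → ℕ := fun i => (seq i).1 with hsk
  set sj : ℕ → ℕ := fun i => (seq i).2.1 with hsj
  set sφ : ∀ i, (S (sk i)) →ₐ[ℂ] B := fun i => (seq i).2.2.1 with hsφdef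
  have hsφ : ∀ i x, sφ i x ∈ T (sj i) := fun i => (seq i).2.2.2
  set sψ : ∀ i, (T (sj i)) →ₐ[ℂ] A := fun i => stepψ (seq i) (i + 1) with hsψdef
  have B1 : ∀ i, i + 1 ≤ sk (i + 1) := fun i => hA1 (seq i) (i + 1)
  have B2 : ∀ i, i + 1 ≤ sj (i + 1) := fun i => hA2 (seq i) (i + 1)
  have B3 : ∀ i, sk i ≤ sk (i + 1) := fun i => hA3 (seq i) (i + 1)
  have B4 : ∀ i, sj i ≤ sj (i + 1) := fun i => hA4 (seq i) (i + 1)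
  have B5 : ∀ i y, sψ i y ∈ S (sk (i + 1)) := fun i => hA5 (seq i) (i + 1)
  have B6 : ∀ i (x : S (sk i)), sψ i ⟨sφ i x, hsφ i x⟩ = (x : A) := fun i => hA6 (seq i) (i + 1)
  have B7 : ∀ i (y : T (sj i)) (hy : sψ i y ∈ S (sk (i + 1))),
      sφ (i + 1) ⟨sψ i y, hy⟩ = (y : B) := fun i => hA7 (seq i) (i + 1)
  have skmono : Monotone sk := monotone_nat_of_le_succ B3
  have sjmono : Monotone sj := monotone_nat_of_le_succ B4
  -- compatibility of consecutive φ's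
  have C1 : ∀ i (x : S (sk i)) (hx : (x : A) ∈ S (sk (i + 1))),
      sφ (i + 1) ⟨(x : A), hx⟩ = sφ i x := by
    intro i x hx
    have h1 : (⟨(x : A), hx⟩ : S (sk (i + 1))) = ⟨sψ i ⟨sφ i x, hsφ i x⟩, by
        rw [B6 i x]; exact hx⟩ := Subtype.ext (B6 i x).symm
    rw [h1]
    have := B7 i ⟨sφ i x, hsφ i x⟩ (by rw [B6 i x]; exact hx)
    rw [this]
  have C1ψ : ∀ i (y : T (sj i)) (hy : (y : B) ∈ T (sj (i + 1))),
      sψ (i + 1) ⟨(y : B), hy⟩ = sψ i y := by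
    intro i y hy
    have hx : sψ i y ∈ S (sk (i + 1)) := B5 i y
    have h1 : (⟨(y : B), hy⟩ : T (sj (i + 1)))
        = ⟨sφ (i + 1) ⟨sψ i y, hx⟩, hsφ (i + 1) _⟩ := Subtype.ext (B7 i y hx).symm
    rw [h1]
    have := B6 (i + 1) (⟨sψ i y, hx⟩ : S (sk (i + 1)))
    rw [this]
  -- general compatibility
  have D1 : ∀ i i', i ≤ i' → ∀ (a : A) (h : a ∈ S (sk i)) (h' : a ∈ S (sk i')),
      sφ i' ⟨a, h'⟩ = sφ i ⟨a, h⟩ := by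
    intro i i' hii'
    induction i' , hii' using Nat.le_induction with
    | base => intro a h h'; rfl
    | succ i' hii' ih =>
      intro a h h'
      have hmid : a ∈ S (sk i') := hS (skmono hii') h
      have := C1 i' ⟨a, hmid⟩ h'
      rw [this, ih a h hmid]
  have D1ψ : ∀ i i', i ≤ i' → ∀ (b : B) (h : b ∈ T (sj i)) (h' : b ∈ T (sj i')),
      sψ i' ⟨b, h'⟩ = sψ i ⟨b, h⟩ := by
    intro i i' hii'
    induction i' , hii' using Nat.le_induction with
    | base => intro b h h'; rfl
    | succ i' hii' ih =>
      intro b h h'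
      have hmid : b ∈ T (sj i') := hT (sjmono hii') h
      have := C1ψ i' ⟨b, hmid⟩ h'
      rw [this, ih b h hmid]
  -- cofinality
  have memS : ∀ a : A, ∃ i, a ∈ S (sk i) := by
    intro a
    obtain ⟨K, hK⟩ := hSA a
    exact ⟨K + 1, hS (le_trans (Nat.le_succ K) (B1 K)) hK⟩
  have memT : ∀ b : B, ∃ i, b ∈ T (sj i) := by
    intro b
    obtain ⟨K, hK⟩ := hTB b
    exact ⟨K + 1, hT (le_trans (Nat.le_succ K) (B2 K)) hK⟩
  choose idxA hidxA using memS
  choose idxB hidxB using memT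
  -- the forward and backward maps
  set Φf : A → B := fun a => sφ (idxA a) ⟨a, hidxA a⟩ with hΦf
  set Ψf : B → A := fun b => sψ (idxB b) ⟨b, hidxB b⟩ with hΨf
  have wdΦ : ∀ (a : A) (i : ℕ) (h : a ∈ S (sk i)), Φf a = sφ i ⟨a, h⟩ := by
    intro a i h
    rcases le_total (idxA a) i with hle | hle
    · exact (D1 _ _ hle a (hidxA a) h).symm
    · exact (D1 _ _ hle a h (hidxA a)).symm ▸ rfl
  have wdΨ : ∀ (b : B) (i : ℕ) (h : b ∈ T (sj i)), Ψf b = sψ i ⟨b, h⟩ := by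
    intro b i h
    rcases le_total (idxB b) i with hle | hle
    · exact (D1ψ _ _ hle b (hidxB b) h).symm
    · exact (D1ψ _ _ hle b h (hidxB b)).symm ▸ rfl
  -- Φ is an algebra hom
  have hΦ1 : Φf 1 = 1 := by
    rw [wdΦ 1 0 (one_mem _), show (⟨(1 : A), one_mem _⟩ : S (sk 0)) = 1 from rfl, _root_.map_one]
  have hΦmul : ∀ a b, Φf (a * b) = Φf a * Φf b := by
    intro a b
    set i := max (idxA a) (idxA b) with hi
    have ha : a ∈ S (sk i) := hS (skmono (le_max_left _ _)) (hidxA a)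
    have hb : b ∈ S (sk i) := hS (skmono (le_max_right _ _)) (hidxA b)
    rw [wdΦ a i ha, wdΦ b i hb, wdΦ (a * b) i (mul_mem ha hb),
      show (⟨a * b, mul_mem ha hb⟩ : S (sk i)) = ⟨a, ha⟩ * ⟨b, hb⟩ from rfl, _root_.map_mul]
  have hΦadd : ∀ a b, Φf (a + b) = Φf a + Φf b := by
    intro a b
    set i := max (idxA a) (idxA b) with hi
    have ha : a ∈ S (sk i) := hS (skmono (le_max_left _ _)) (hidxA a)
    have hb : b ∈ S (sk i) := hS (skmono (le_max_right _ _)) (hidxA b)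
    rw [wdΦ a i ha, wdΦ b i hb, wdΦ (a + b) i (add_mem ha hb),
      show (⟨a + b, add_mem ha hb⟩ : S (sk i)) = ⟨a, ha⟩ + ⟨b, hb⟩ from rfl, _root_.map_add]
  have hΦ0 : Φf 0 = 0 := by
    rw [wdΦ 0 0 (zero_mem _), show (⟨(0 : A), zero_mem _⟩ : S (sk 0)) = 0 from rfl, _root_.map_zero]
  have hΦalg : ∀ r : ℂ, Φf (algebraMap ℂ A r) = algebraMap ℂ B r := by
    intro r
    rw [wdΦ _ 0 (algebraMap_mem _ r),
      show (⟨algebraMap ℂ A r, algebraMap_mem _ r⟩ : S (sk 0))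
        = algebraMap ℂ (S (sk 0)) r from rfl, AlgHom.commutes]
  -- inverse identities
  have hΨΦ : ∀ a, Ψf (Φf a) = a := by
    intro a
    set i := idxA a with hidef
    have h1 : Φf a = sφ i ⟨a, hidxA a⟩ := rfl
    have h2 : Φf a ∈ T (sj i) := h1 ▸ hsφ i _
    rw [wdΨ (Φf a) i h2]
    have h3 : (⟨Φf a, h2⟩ : T (sj i)) = ⟨sφ i ⟨a, hidxA a⟩, hsφ i _⟩ := Subtype.ext h1
    rw [h3, B6 i]
  have hΦΨ : ∀ b, Φf (Ψf b) = b := by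
    intro b
    set i := idxB b with hidef
    have h1 : Ψf b = sψ i ⟨b, hidxB b⟩ := rfl
    have h2 : Ψf b ∈ S (sk (i + 1)) := h1 ▸ B5 i _
    rw [wdΦ (Ψf b) (i + 1) h2]
    have h3 : (⟨Ψf b, h2⟩ : S (sk (i + 1))) = ⟨sψ i ⟨b, hidxB b⟩, B5 i _⟩ := Subtype.ext h1
    rw [h3, B7 i]
  -- assemble
  refine ⟨{ toFun := Φf, invFun := Ψf, left_inv := hΨΦ, right_inv := hΦΨ,
            map_mul' := hΦmul, map_add' := hΦadd, commutes' := hΦalg }⟩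

end StmtAux19

theorem stmt19 (A B : Type*) [Ring A] [Algebra ℂ A] [Ring B] [Algebra ℂ B]
    (S : ℕ → Subalgebra ℂ A) (T : ℕ → Subalgebra ℂ B)
    (hS : Monotone S) (hT : Monotone T)
    (hSA : ∀ a : A, ∃ k, a ∈ S k) (hTB : ∀ b : B, ∃ j, b ∈ T j)
    (n m : ℕ → ℕ+)
    (hSn : ∀ k, Nonempty (S k ≃ₐ[ℂ] Matrix (Fin (n k)) (Fin (n k)) ℂ))
    (hTm : ∀ j, Nonempty (T j ≃ₐ[ℂ] Matrix (Fin (m j)) (Fin (m j)) ℂ)) :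
    Nonempty (A ≃ₐ[ℂ] B) ↔
      {d : ℕ+ | ∃ k, d ∣ n k} = {d : ℕ+ | ∃ j, d ∣ m j} := by
  constructor
  · rintro ⟨Φ⟩
    exact Set.Subset.antisymm (stmt19_subset S T hT hTB n m hSn hTm Φ)
      (stmt19_subset T S hS hSA m n hTm hSn Φ.symm)
  · intro h
    exact stmt19_construct S T hS hT hSA hTB n m hSn hTm h
end
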